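/- arXiv:2105.06094 — 11 statements merged into one kernel-verified Lean document; each statement's English description precedes it below -/
import Mathlib

section
/- If f : (a,b) → ℝ is λ-convex for some λ ∈ (0,1) (i.e., f(λx + (1-λ)y) ≤ λf(x) + (1-λ)f(y) for all x, y in (a,b)) and f is bounded on some open interval around a point x ∈ (a,b), then f is continuous at x. -/
open Set

/-- Iterated `λ`-convexity: weights `λ^n` are attainable. -/
lemma iter_lambda_convex (f : ℝ → ℝ) (lam : ℝ) (h0 : 0 ≤ lam) (h1 : lam ≤ 1)
    (S : Set ℝ) (hS : Convex ℝ S)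
    (hconv : ∀ p ∈ S, ∀ q ∈ S, f (lam * p + (1 - lam) * q) ≤ lam * f p + (1 - lam) * f q) :
    ∀ n : ℕ, ∀ u ∈ S, ∀ v ∈ S,
      f (lam ^ n * u + (1 - lam ^ n) * v) ≤ lam ^ n * f u + (1 - lam ^ n) * f v := by
  intro n
  induction n with
  | zero => intro u hu v hv; simp
  | succ n ih =>
    intro u hu v hv
    have hLn0 : 0 ≤ lam ^ n := pow_nonneg h0 n
    have hLn1 : lam ^ n ≤ 1 := pow_le_one₀ h0 h1
    have hp : lam ^ n * u + (1 - lam ^ n) * v ∈ S := by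
      have := hS hu hv (a := lam ^ n) (b := 1 - lam ^ n) hLn0 (by linarith) (by ring)
      simpa [smul_eq_mul] using this
    have h2 := hconv _ hp v hv
    have h3 := ih u hu v hv
    have key : lam * (lam ^ n * u + (1 - lam ^ n) * v) + (1 - lam) * v
        = lam ^ (n + 1) * u + (1 - lam ^ (n + 1)) * v := by ring
    calc f (lam ^ (n + 1) * u + (1 - lam ^ (n + 1)) * v)
        = f (lam * (lam ^ n * u + (1 - lam ^ n) * v) + (1 - lam) * v) := by rw [key]
      _ ≤ lam * f (lam ^ n * u + (1 - lam ^ n) * v) + (1 - lam) * f v := h2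
      _ ≤ lam * (lam ^ n * f u + (1 - lam ^ n) * f v) + (1 - lam) * f v := by nlinarith
      _ = lam ^ (n + 1) * f u + (1 - lam ^ (n + 1)) * f v := by ring

set_option maxHeartbeats 1000000 in
/-- A `λ`-convex function on an interval `(a,b)` (endpoints possibly infinite)
that is bounded on an open interval around a point `x ∈ (a,b)` is continuous at `x`. -/
theorem lambda_convex_bounded_implies_continuousAt
    (a b : EReal) (hab : a < b) (lam : ℝ) (hlam0 : 0 < lam) (hlam1 : lam < 1)
    (f : ℝ → ℝ) (D : Set ℝ) (hD : D = {x : ℝ | a < (x : EReal) ∧ (x : EReal) < b})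
    (hconv : ∀ x ∈ D, ∀ y ∈ D,
      f (lam * x + (1 - lam) * y) ≤ lam * f x + (1 - lam) * f y)
    (x : ℝ) (hx : x ∈ D)
    (hbd : ∃ ε > 0, ∃ M : ℝ, Ioo (x - ε) (x + ε) ⊆ D ∧
      ∀ y ∈ Ioo (x - ε) (x + ε), |f y| ≤ M) :
    ContinuousAt f x := by
  obtain ⟨ε, hε, M, hsub, hM⟩ := hbd
  have hIconv : Convex ℝ (Ioo (x - ε) (x + ε)) := convex_Ioo _ _
  have hconvI : ∀ p ∈ Ioo (x - ε) (x + ε), ∀ q ∈ Ioo (x - ε) (x + ε),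
      f (lam * p + (1 - lam) * q) ≤ lam * f p + (1 - lam) * f q :=
    fun p hp q hq => hconv p (hsub hp) q (hsub hq)
  have iter := iter_lambda_convex f lam hlam0.le hlam1.le _ hIconv hconvI
  have hxI : x ∈ Ioo (x - ε) (x + ε) := ⟨by linarith, by linarith⟩
  have hfx : |f x| ≤ M := hM x hxI
  have hM0 : 0 ≤ M := (abs_nonneg _).trans hfx
  rw [Metric.continuousAt_iff]
  intro e he
  have hc : 0 < e * (1 - lam) / (2 * M + 1) := by
    apply div_pos (by nlinarith) (by linarith)
  obtain ⟨n, hn⟩ := exists_pow_lt_of_lt_one hc hlam1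
  set L := lam ^ (n + 1) with hLdef
  have hL0 : 0 < L := pow_pos hlam0 _
  have hL1 : L ≤ 1 := pow_le_one₀ hlam0.le hlam1.le
  clear_value L
  have hLlt : L < e * (1 - lam) / (2 * M + 1) := by
    have : L ≤ lam ^ n := by
      rw [hLdef, pow_succ]
      nlinarith [pow_nonneg hlam0.le n]
    linarith
  rw [lt_div_iff₀ (by linarith : (0:ℝ) < 2 * M + 1)] at hLlt
  refine ⟨L * ε / 2, by positivity, ?_⟩
  intro y hy
  rw [Real.dist_eq] at hy ⊢
  have hyx : |y - x| < L * ε / 2 := hy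
  have hyx' := abs_lt.mp hyx
  have hyI : y ∈ Ioo (x - ε) (x + ε) := by
    constructor <;> nlinarith
  have hfy := abs_le.mp (hM y hyI)
  have hfx' := abs_le.mp hfx
  -- the two auxiliary points
  set v : ℝ := x + (y - x) / L with hvdef
  set u : ℝ := x - (1 - L) * (y - x) / L with hudef
  clear_value v u
  have hdiv : |(y - x) / L| < ε / 2 := by
    rw [abs_div, abs_of_pos hL0, div_lt_iff₀ hL0]
    calc |y - x| < L * ε / 2 := hyx
      _ = ε / 2 * L := by ring
  have hdiv' := abs_lt.mp hdiv
  have hvI : v ∈ Ioo (x - ε) (x + ε) := by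
    constructor <;> (rw [hvdef]; linarith)
  have huI : u ∈ Ioo (x - ε) (x + ε) := by
    have h1 : |(1 - L) * (y - x) / L| ≤ |(y - x) / L| := by
      rw [mul_div_assoc, abs_mul, abs_of_nonneg (by linarith : (0:ℝ) ≤ 1 - L)]
      nlinarith [abs_nonneg ((y - x) / L)]
    have h2 := abs_lt.mp (lt_of_le_of_lt h1 hdiv)
    constructor <;> (rw [hudef]; linarith)
  have hfv := abs_le.mp (hM v hvI)
  have hfu := abs_le.mp (hM u huI)
  -- identities
  have idy : L * v + (1 - L) * x = y := by
    rw [hvdef]; field_simp; ring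
  have idx : L * u + (1 - L) * y = x := by
    rw [hudef]; field_simp; ring
  have hup : f y ≤ L * f v + (1 - L) * f x := by
    have := iter (n + 1) v hvI x hxI
    rwa [← hLdef, idy] at this
  have hlow : f x ≤ L * f u + (1 - L) * f y := by
    have := iter (n + 1) u huI y hyI
    rwa [← hLdef, idx] at this
  rw [abs_lt]
  have he2 : 0 ≤ e * lam := mul_nonneg he.le hlam0.le
  have t3 : L * (2 * M) < e := by nlinarith [hLlt, he2, hL0]
  constructor
  · -- f y - f x > -e, i.e. f x - f y < e
    have e1 : L * (f u - f y) ≤ L * (2 * M) :=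
      mul_le_mul_of_nonneg_left (by linarith) hL0.le
    have t1 : f x - f y ≤ L * (f u - f y) := by nlinarith [hlow]
    linarith [t1, e1, t3]
  · have e1 : L * (f v - f x) ≤ L * (2 * M) :=
      mul_le_mul_of_nonneg_left (by linarith) hL0.le
    have t1 : f y - f x ≤ L * (f v - f x) := by nlinarith [hup]
    linarith [t1, e1, t3]
end

section
/- If f : (a,b) → ℝ is λ-convex for some fixed λ ∈ (0,1) and f is continuous on (a,b), then f is convex on (a,b). -/
open Set

/-- A `λ`-convex function (for a single fixed `λ ∈ (0,1)`) on an interval `(a,b)`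
that is continuous on `(a,b)` is convex on `(a,b)`. -/
theorem lambda_convex_continuous_implies_convex
    (a b : EReal) (hab : a < b) (lam : ℝ) (hlam0 : 0 < lam) (hlam1 : lam < 1)
    (f : ℝ → ℝ) (D : Set ℝ) (hD : D = {x : ℝ | a < (x : EReal) ∧ (x : EReal) < b})
    (hconv : ∀ x ∈ D, ∀ y ∈ D,
      f (lam * x + (1 - lam) * y) ≤ lam * f x + (1 - lam) * f y)
    (hcont : ContinuousOn f D) :
    ConvexOn ℝ D f := by
  -- membership of convex combinations in D
  have hmem : ∀ x ∈ D, ∀ y ∈ D, ∀ t ∈ Icc (0:ℝ) 1, t * x + (1 - t) * y ∈ D := by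
    intro x hx y hy t ht
    rw [hD] at hx hy ⊢
    obtain ⟨hx1, hx2⟩ := hx
    obtain ⟨hy1, hy2⟩ := hy
    obtain ⟨ht0, ht1⟩ := ht
    have hmin : min x y ≤ t * x + (1 - t) * y := by
      rcases le_total x y with h | h
      · rw [min_eq_left h]; nlinarith
      · rw [min_eq_right h]; nlinarith
    have hmax : t * x + (1 - t) * y ≤ max x y := by
      rcases le_total x y with h | h
      · rw [max_eq_right h]; nlinarith
      · rw [max_eq_left h]; nlinarith
    constructor
    · have h1 : a < ((min x y : ℝ) : EReal) := by
        rcases min_cases x y with ⟨h, _⟩ | ⟨h, _⟩ <;> rw [h] <;> assumption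
      exact lt_of_lt_of_le h1 (EReal.coe_le_coe_iff.mpr hmin)
    · have h1 : ((max x y : ℝ) : EReal) < b := by
        rcases max_cases x y with ⟨h, _⟩ | ⟨h, _⟩ <;> rw [h] <;> assumption
      exact lt_of_le_of_lt (EReal.coe_le_coe_iff.mpr hmax) h1
  have hDconv : Convex ℝ D := by
    intro x hx y hy p q hp hq hpq
    have := hmem x hx y hy p ⟨hp, by linarith⟩
    simpa [smul_eq_mul, show (1:ℝ) - p = q by linarith] using this
  refine ⟨hDconv, ?_⟩
  intro x hx y hy p q hp hq hpq
  simp only [smul_eq_mul]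
  -- set of good parameters
  set S : Set ℝ := {t | t ∈ Icc (0:ℝ) 1 ∧
      f (t * x + (1 - t) * y) ≤ t * f x + (1 - t) * f y} with hS
  have hSsub : S ⊆ Icc (0:ℝ) 1 := fun t ht => ht.1
  have h0S : (0:ℝ) ∈ S := ⟨⟨le_refl _, zero_le_one⟩, by norm_num⟩
  have h1S : (1:ℝ) ∈ S := ⟨⟨zero_le_one, le_refl _⟩, by norm_num⟩
  -- S is closed under λ-combination
  have hcomb : ∀ s ∈ S, ∀ t ∈ S, lam * s + (1 - lam) * t ∈ S := by
    intro s hs t ht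
    obtain ⟨⟨hs0, hs1⟩, hsf⟩ := hs
    obtain ⟨⟨ht0, ht1⟩, htf⟩ := ht
    have hmemS : s * x + (1 - s) * y ∈ D := hmem x hx y hy s ⟨hs0, hs1⟩
    have hmemT : t * x + (1 - t) * y ∈ D := hmem x hx y hy t ⟨ht0, ht1⟩
    constructor
    · constructor <;> nlinarith
    · have key := hconv _ hmemS _ hmemT
      have heq : lam * (s * x + (1 - s) * y) + (1 - lam) * (t * x + (1 - t) * y)
          = (lam * s + (1 - lam) * t) * x + (1 - (lam * s + (1 - lam) * t)) * y := by ring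
      rw [heq] at key
      calc f ((lam * s + (1 - lam) * t) * x + (1 - (lam * s + (1 - lam) * t)) * y)
          ≤ lam * f (s * x + (1 - s) * y) + (1 - lam) * f (t * x + (1 - t) * y) := key
        _ ≤ lam * (s * f x + (1 - s) * f y) + (1 - lam) * (t * f x + (1 - t) * f y) := by
            nlinarith
        _ = (lam * s + (1 - lam) * t) * f x + (1 - (lam * s + (1 - lam) * t)) * f y := by ring
  -- S is closed
  have hSclosed : IsClosed S := by
    have hcg : ContinuousOn (fun t : ℝ =>
        f (t * x + (1 - t) * y) - (t * f x + (1 - t) * f y)) (Icc (0:ℝ) 1) := by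
      apply ContinuousOn.sub
      · apply hcont.comp (by fun_prop)
        intro t ht
        exact hmem x hx y hy t ht
      · fun_prop
    have := hcg.preimage_isClosed_of_isClosed isClosed_Icc (isClosed_Iic (a := (0:ℝ)))
    convert this using 1
    ext t
    simp only [hS, mem_setOf_eq, mem_inter_iff, mem_preimage, mem_Iic, sub_nonpos]
  -- S = Icc 0 1
  have hfull : ∀ t ∈ Icc (0:ℝ) 1, t ∈ S := by
    intro t ht
    by_contra htS
    set u := sSup (S ∩ Iic t) with hu
    set v := sInf (S ∩ Ici t) with hv
    have hne1 : (S ∩ Iic t).Nonempty := ⟨0, h0S, ht.1⟩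
    have hne2 : (S ∩ Ici t).Nonempty := ⟨1, h1S, ht.2⟩
    have hbdd1 : BddAbove (S ∩ Iic t) := ⟨t, fun z hz => hz.2⟩
    have hbdd2 : BddBelow (S ∩ Ici t) := ⟨t, fun z hz => hz.2⟩
    have huS : u ∈ S ∩ Iic t :=
      (hSclosed.inter isClosed_Iic).csSup_mem hne1 hbdd1
    have hvS : v ∈ S ∩ Ici t :=
      (hSclosed.inter isClosed_Ici).csInf_mem hne2 hbdd2
    have hut : u < t := lt_of_le_of_ne huS.2 (fun h => htS (h ▸ huS.1))
    have htv : t < v := lt_of_le_of_ne (hvS.2) (fun h => htS (h ▸ hvS.1))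
    set w := lam * u + (1 - lam) * v with hw
    have hwS : w ∈ S := hcomb u huS.1 v hvS.1
    have huw : u < w := by nlinarith
    have hwv : w < v := by nlinarith
    rcases le_or_gt w t with h | h
    · have : w ≤ u := le_csSup hbdd1 ⟨hwS, h⟩
      linarith
    · have : v ≤ w := csInf_le hbdd2 ⟨hwS, le_of_lt h⟩
      linarith
  have hp1 : p ∈ Icc (0:ℝ) 1 := ⟨hp, by linarith⟩
  have := (hfull p hp1).2
  have hq' : q = 1 - p := by linarith
  rw [hq']
  convert this using 3
end

section
/- If f : (a,b) → ℝ is λ-convex for some λ ∈ (0,1) and f is bounded on an open interval around every point of (a,b), then f is convex on (a,b). -/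
open Set

/-- A `λ`-convex function on an interval `(a,b)` that is locally bounded around
every point of `(a,b)` is convex on `(a,b)`. -/
theorem lambda_convex_locally_bounded_implies_convex
    (a b : EReal) (hab : a < b) (lam : ℝ) (hlam0 : 0 < lam) (hlam1 : lam < 1)
    (f : ℝ → ℝ) (D : Set ℝ) (hD : D = {x : ℝ | a < (x : EReal) ∧ (x : EReal) < b})
    (hconv : ∀ x ∈ D, ∀ y ∈ D,
      f (lam * x + (1 - lam) * y) ≤ lam * f x + (1 - lam) * f y)
    (hbd : ∀ x ∈ D, ∃ ε > 0, ∃ M : ℝ, ∀ y ∈ Ioo (x - ε) (x + ε) ∩ D, |f y| ≤ M) :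
    ConvexOn ℝ D f := by
  -- D is convex
  have hDconv : Convex ℝ D := by
    rw [hD, convex_iff_ordConnected]
    constructor
    intro x hx y hy z hz
    exact ⟨lt_of_lt_of_le hx.1 (EReal.coe_le_coe_iff.2 hz.1),
           lt_of_le_of_lt (EReal.coe_le_coe_iff.2 hz.2) hy.2⟩
  -- D is open
  have hDopen : IsOpen D := by
    rw [hD]
    exact (isOpen_Ioo (a := a) (b := b)).preimage continuous_coe_real_ereal
  -- convex combinations stay in D
  have hcomb : ∀ s : ℝ, 0 ≤ s → s ≤ 1 → ∀ x ∈ D, ∀ y ∈ D, s*x + (1-s)*y ∈ D := by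
    intro s hs0 hs1 x hx y hy
    have := hDconv hx hy hs0 (by linarith : (0:ℝ) ≤ 1-s) (by ring)
    simpa [smul_eq_mul] using this
  -- the set of good convexity parameters
  set S : Set ℝ := {t | t ∈ Icc (0:ℝ) 1 ∧ ∀ x ∈ D, ∀ y ∈ D,
      f (t*x + (1-t)*y) ≤ t * f x + (1-t) * f y} with hS
  have mem0 : (0:ℝ) ∈ S := by
    refine ⟨⟨le_refl 0, zero_le_one⟩, ?_⟩
    intro x hx y hy; norm_num
  have mem1 : (1:ℝ) ∈ S := by
    refine ⟨⟨zero_le_one, le_refl 1⟩, ?_⟩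
    intro x hx y hy; norm_num
  have memc : ∀ s ∈ S, ∀ t ∈ S, lam*s + (1-lam)*t ∈ S := by
    rintro s ⟨⟨hs0, hs1⟩, hs⟩ t ⟨⟨ht0, ht1⟩, ht⟩
    refine ⟨⟨by nlinarith, by nlinarith⟩, ?_⟩
    intro x hx y hy
    have hA : s*x + (1-s)*y ∈ D := hcomb s hs0 hs1 x hx y hy
    have hB : t*x + (1-t)*y ∈ D := hcomb t ht0 ht1 x hx y hy
    have h1 := hconv _ hA _ hB
    have h2 := hs x hx y hy
    have h3 := ht x hx y hy
    have e : (lam*s+(1-lam)*t)*x + (1-(lam*s+(1-lam)*t))*y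
           = lam*(s*x+(1-s)*y) + (1-lam)*(t*x+(1-t)*y) := by ring
    rw [e]
    have h2' := mul_le_mul_of_nonneg_left h2 hlam0.le
    have h3' := mul_le_mul_of_nonneg_left h3 (by linarith : (0:ℝ) ≤ 1 - lam)
    nlinarith [h1, h2', h3']
  -- density of S in [0,1]
  set m : ℝ := max lam (1-lam) with hm
  have hm0 : 0 < m := lt_of_lt_of_le hlam0 (le_max_left _ _)
  have hm1 : m < 1 := max_lt hlam1 (by linarith)
  have dens : ∀ n : ℕ, ∀ t ∈ Icc (0:ℝ) 1, ∃ u ∈ S, |u - t| ≤ m ^ n := by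
    intro n
    induction n with
    | zero =>
        rintro t ⟨ht0, ht1⟩
        exact ⟨0, mem0, by rw [pow_zero, zero_sub, abs_neg, abs_of_nonneg ht0]; exact ht1⟩
    | succ n ih =>
        rintro t ⟨ht0, ht1⟩
        by_cases hc : t ≤ lam
        · obtain ⟨u, hu, hud⟩ := ih (t/lam) ⟨div_nonneg ht0 hlam0.le, (div_le_one hlam0).2 hc⟩
          refine ⟨lam*u + (1-lam)*0, memc u hu 0 mem0, ?_⟩
          have e : lam*u + (1-lam)*0 - t = lam * (u - t/lam) := by
            field_simp; ring
          rw [e, abs_mul, abs_of_pos hlam0]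
          calc lam * |u - t/lam| ≤ lam * m^n := mul_le_mul_of_nonneg_left hud hlam0.le
            _ ≤ m * m^n := mul_le_mul_of_nonneg_right (le_max_left _ _) (pow_nonneg hm0.le n)
            _ = m^(n+1) := by rw [pow_succ]; ring
        · push_neg at hc
          have h1l : (0:ℝ) < 1 - lam := by linarith
          obtain ⟨u, hu, hud⟩ := ih ((t-lam)/(1-lam))
            ⟨div_nonneg (by linarith) h1l.le, (div_le_one h1l).2 (by linarith)⟩
          refine ⟨lam*1 + (1-lam)*u, memc 1 mem1 u hu, ?_⟩
          have e : lam*1 + (1-lam)*u - t = (1-lam) * (u - (t-lam)/(1-lam)) := by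
            field_simp; ring
          rw [e, abs_mul, abs_of_pos h1l]
          calc (1-lam) * |u - (t-lam)/(1-lam)| ≤ (1-lam) * m^n :=
                mul_le_mul_of_nonneg_left hud h1l.le
            _ ≤ m * m^n := mul_le_mul_of_nonneg_right (le_max_right _ _) (pow_nonneg hm0.le n)
            _ = m^(n+1) := by rw [pow_succ]; ring
  have dens' : ∀ t ∈ Icc (0:ℝ) 1, ∀ e : ℝ, 0 < e → ∃ u ∈ S, |u - t| < e := by
    intro t ht e he
    obtain ⟨n, hn⟩ := exists_pow_lt_of_lt_one he hm1
    obtain ⟨u, hu, hud⟩ := dens n t ht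
    exact ⟨u, hu, lt_of_le_of_lt hud hn⟩
  -- local boundedness on metric balls inside D
  have hball : ∀ z ∈ D, ∃ ε > 0, ∃ M : ℝ, 0 ≤ M ∧
      (∀ y : ℝ, |y - z| < ε → y ∈ D) ∧ (∀ y : ℝ, |y - z| < ε → |f y| ≤ M) := by
    intro z hz
    obtain ⟨ε₁, hε₁, M, hM⟩ := hbd z hz
    obtain ⟨ε₂, hε₂, hsub⟩ := Metric.isOpen_iff.1 hDopen z hz
    have hmemD : ∀ y : ℝ, |y - z| < min ε₁ ε₂ → y ∈ D := by
      intro y hy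
      apply hsub
      rw [Metric.mem_ball, Real.dist_eq]
      exact lt_of_lt_of_le hy (min_le_right _ _)
    refine ⟨min ε₁ ε₂, lt_min hε₁ hε₂, max M 0, le_max_right _ _, hmemD, ?_⟩
    intro y hy
    have h1 := abs_lt.1 (lt_of_lt_of_le hy (min_le_left _ _))
    have : y ∈ Ioo (z - ε₁) (z + ε₁) ∩ D :=
      ⟨⟨by linarith [h1.1], by linarith [h1.2]⟩, hmemD y hy⟩
    exact le_trans (hM y this) (le_max_left _ _)
  -- main proof of convexity
  refine ⟨hDconv, ?_⟩
  intro x hx y hy p q hp hq hpq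
  simp only [smul_eq_mul]
  have hq' : q = 1 - p := by linarith
  set z : ℝ := p*x + q*y with hz
  have hzD : z ∈ D := by
    have := hDconv hx hy hp hq hpq
    simpa [smul_eq_mul] using this
  clear_value z
  obtain ⟨ε, hε, M, hM0, hballD, hballM⟩ := hball z hzD
  refine le_of_forall_pos_le_add ?_
  intro δ hδ
  set C : ℝ := |f x| + |f y| + M + 1 with hC
  have hC0 : 0 < C := by positivity
  clear_value C
  -- choose ν ∈ S close to 1
  set r : ℝ := min (δ / (4*C)) (1/2) with hr
  have hr0 : 0 < r := lt_min (by positivity) one_half_pos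
  have hrle : r ≤ 1/2 := min_le_right _ _
  clear_value r
  obtain ⟨ν, hν, hνd⟩ := dens' (1 - r/2) ⟨by linarith, by linarith⟩ (r/2) (by positivity)
  obtain ⟨⟨hν0, hν1⟩, hνc⟩ := hν
  have hνd' := abs_lt.1 hνd
  have hν1' : ν < 1 := by linarith [hνd'.2]
  have hνlb : 1 - r < ν := by linarith [hνd'.1]
  have h1ν : 0 < 1 - ν := by linarith
  -- choose μ ∈ S close to p
  have hp1 : p ≤ 1 := by linarith
  have hemin : 0 < min (δ/(4*C)) ((1-ν)*ε/(|x-y|+1)) :=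
    lt_min (by positivity) (div_pos (mul_pos h1ν hε) (by positivity))
  obtain ⟨μ, hμ, hμd⟩ := dens' p ⟨hp, hp1⟩ _ hemin
  obtain ⟨⟨hμ0, hμ1⟩, hμc⟩ := hμ
  set A : ℝ := μ*x + (1-μ)*y with hA
  have hAD : A ∈ D := hcomb μ hμ0 hμ1 x hx y hy
  clear_value A
  -- A is close to z
  have eAz : A - z = (μ - p)*(x - y) := by rw [hz, hA, hq']; ring
  have hAz : |A - z| < (1-ν)*ε := by
    rw [eAz, abs_mul]
    have h1 : |μ - p| < (1-ν)*ε/(|x-y|+1) := lt_of_lt_of_le hμd (min_le_right _ _)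
    calc |μ - p| * |x - y| ≤ |μ - p| * (|x - y| + 1) :=
          mul_le_mul_of_nonneg_left (by linarith) (abs_nonneg _)
      _ < (1-ν)*ε := by
          have := (lt_div_iff₀ (by positivity : (0:ℝ) < |x-y|+1)).1 h1
          linarith
  have hAε : |A - z| < ε := by nlinarith [mul_nonneg hν0 hε.le]
  -- the reflected point w
  set w : ℝ := (z - ν*A)/(1-ν) with hw
  clear_value w
  have hzc : ν*A + (1-ν)*w = z := by
    rw [hw]; field_simp; ring
  have hwz : |w - z| < ε := by
    have e : w - z = (ν/(1-ν)) * (z - A) := by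
      rw [hw]; field_simp; ring
    rw [e, abs_mul, abs_div, abs_of_nonneg hν0, abs_of_pos h1ν]
    have h2 : |z - A| < (1-ν)*ε := by rwa [abs_sub_comm]
    have h3 : (ν/(1-ν)) * |z-A| ≤ (ν/(1-ν)) * ((1-ν)*ε) :=
      mul_le_mul_of_nonneg_left h2.le (div_nonneg hν0 h1ν.le)
    have h4 : (ν/(1-ν)) * ((1-ν)*ε) = ν*ε := by field_simp
    have h5 : ν*ε < ε := mul_lt_of_lt_one_left hε hν1'
    linarith
  have hwD : w ∈ D := hballD w hwz
  have hwM : |f w| ≤ M := hballM w hwz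
  -- the two convexity steps
  have hstep1 : f z ≤ ν * f A + (1-ν) * f w := by
    have := hνc A hAD w hwD
    rwa [hzc] at this
  have hstep2 : f A ≤ μ * f x + (1-μ) * f y := by
    rw [hA]; exact hμc x hx y hy
  -- final arithmetic
  have habsA : |μ * f x + (1-μ) * f y| ≤ C := by
    have h1 : |μ * f x + (1-μ)*f y| ≤ |μ| * |f x| + |1 - μ| * |f y| := by
      calc _ ≤ |μ * f x| + |(1-μ)*f y| := abs_add_le _ _
        _ = _ := by rw [abs_mul, abs_mul]
    rw [abs_of_nonneg hμ0, abs_of_nonneg (by linarith : (0:ℝ) ≤ 1-μ)] at h1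
    linarith [mul_nonneg (by linarith : (0:ℝ) ≤ 1-μ) (abs_nonneg (f x)),
      mul_nonneg hμ0 (abs_nonneg (f y)), hM0]
  have key1 : ν * f A ≤ ν * (μ * f x + (1-μ) * f y) :=
    mul_le_mul_of_nonneg_left hstep2 hν0
  have key2 : (1-ν) * f w ≤ (1-ν) * M :=
    mul_le_mul_of_nonneg_left (abs_le.1 hwM).2 h1ν.le
  have habsA' := abs_le.1 habsA
  have key3 : ν * (μ * f x + (1-μ)*f y) ≤ (μ * f x + (1-μ)*f y) + (1-ν)*C := by
    linarith [mul_nonneg h1ν.le (by linarith [habsA'.1] : (0:ℝ) ≤ (μ*f x+(1-μ)*f y) + C)]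
  have hfxy : |f x - f y| ≤ C := by
    have h := abs_sub (f x) (f y)
    rw [hC]; linarith [hM0]
  have h5 : |μ - p| ≤ δ/(4*C) := le_of_lt (lt_of_lt_of_le hμd (min_le_left _ _))
  have key4 : μ * f x + (1-μ)*f y ≤ p * f x + q * f y + (δ/(4*C))*C := by
    have h8 : (μ-p)*(f x - f y) ≤ (δ/(4*C))*C := by
      calc (μ-p)*(f x - f y) ≤ |(μ-p)*(f x - f y)| := le_abs_self _
        _ = |μ - p| * |f x - f y| := abs_mul _ _
        _ ≤ (δ/(4*C)) * C := mul_le_mul h5 hfxy (abs_nonneg _) (by positivity)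
    have e : μ * f x + (1-μ)*f y - (p * f x + q * f y) = (μ-p)*(f x - f y) := by
      rw [hq']; ring
    linarith
  have key5 : 1 - ν ≤ δ/(4*C) := by
    have h6 : r ≤ δ/(4*C) := by rw [hr]; exact min_le_left _ _
    linarith
  have e1 : (δ/(4*C))*C = δ/4 := by field_simp [hC0.ne']
  have key6 : (1-ν)*C ≤ (δ/(4*C))*C := mul_le_mul_of_nonneg_right key5 hC0.le
  have key7 : (1-ν)*M ≤ (δ/(4*C))*C := by
    have h7 : (1-ν)*M ≤ (δ/(4*C))*M := mul_le_mul_of_nonneg_right key5 hM0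
    have hMC : M ≤ C := by rw [hC]; linarith [abs_nonneg (f x), abs_nonneg (f y)]
    have h9 : (δ/(4*C))*M ≤ (δ/(4*C))*C := mul_le_mul_of_nonneg_left hMC (by positivity)
    linarith
  linarith [hstep1, key1, key2, key3, key4, key6, key7]
end

section
/- Fix α > 0. Let φ : [0,∞) → [-∞,∞] be such that ψ(x) := φ(e^x), defined on [-∞,∞) (with e^{-∞} := 0), is convex and strictly increasing, and ψ maps ℝ into ℝ. Then for any two probability densities f, g (nonnegative, integrating to 1) with ∫ f^{1+α} dμ and ∫ g^{1+α} dμ finite, the quantity FDPD_{φ,α}(g,f) := φ(∫ f^{α+1}) − (1 + 1/α) φ(∫ f^α g) + (1/α) φ(∫ g^{α+1}) is nonnegative. -/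
open MeasureTheory ENNReal Set

/-- A probability density in `L_{μ,α}`: nonnegative (being `ℝ≥0∞`-valued), measurable,
integrating to `1`, with finite `(1+α)`-th power integral. -/
def IsDensity (μ : Measure ℝ) (α : ℝ) (f : ℝ → ℝ≥0∞) : Prop :=
  Measurable f ∧ ∫⁻ x, f x ∂μ = 1 ∧ ∫⁻ x, f x ^ (1 + α) ∂μ < ⊤

/-- The functional density power divergence
`FDPD_{φ,α}(g,f) = φ(∫ f^{α+1}) − (1+1/α) φ(∫ f^α g) + (1/α) φ(∫ g^{α+1})`. -/
noncomputable def FDPD (φ : ℝ≥0∞ → EReal) (α : ℝ) (μ : Measure ℝ)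
    (g f : ℝ → ℝ≥0∞) : EReal :=
  φ (∫⁻ x, f x ^ (α + 1) ∂μ)
    - ((1 + 1 / α : ℝ) : EReal) * φ (∫⁻ x, f x ^ α * g x ∂μ)
    + ((1 / α : ℝ) : EReal) * φ (∫⁻ x, g x ^ (α + 1) ∂μ)

/-- `ψ` is convex on `[-∞,∞)` (in the extended-real sense). -/
def ERealConvexOn (ψ : EReal → EReal) : Prop :=
  ∀ x : EReal, x < ⊤ → ∀ y : EReal, y < ⊤ → ∀ t : ℝ, 0 < t → t < 1 →
    ψ ((t : EReal) * x + ((1 - t : ℝ) : EReal) * y) ≤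
      (t : EReal) * ψ x + ((1 - t : ℝ) : EReal) * ψ y

/-- `FDPD_{φ,α}` is a valid divergence on densities in `L_{μ,α}`: it is nonnegative, and
vanishes exactly when the two densities agree `μ`-a.e. -/
def IsValidDivergence (φ : ℝ≥0∞ → EReal) (α : ℝ) (μ : Measure ℝ) : Prop :=
  ∀ f g : ℝ → ℝ≥0∞, IsDensity μ α f → IsDensity μ α g →
    0 ≤ FDPD φ α μ g f ∧ (FDPD φ α μ g f = 0 ↔ f =ᵐ[μ] g)

/-- if `ψ(x) = φ(eˣ)` is convex and strictly increasing on `[-∞,∞)`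
(with `e^{-∞} = 0`) and real-valued on `ℝ`, then `FDPD_{φ,α}(g,f) ≥ 0` for all densities
`f, g ∈ L_{μ,α}` and every `α > 0`. -/
theorem fdpd_nonneg_of_psi_convex_strictMono
    (μ : Measure ℝ) (α : ℝ) (hα : 0 < α) (φ : ℝ≥0∞ → EReal)
    (hconv : ERealConvexOn (fun x => φ (EReal.exp x)))
    (hmono : StrictMonoOn (fun x => φ (EReal.exp x)) (Iio (⊤ : EReal)))
    (hreal : ∀ x : ℝ, φ (EReal.exp (x : EReal)) ≠ ⊤ ∧ φ (EReal.exp (x : EReal)) ≠ ⊥)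
    (f g : ℝ → ℝ≥0∞) (hf : IsDensity μ α f) (hg : IsDensity μ α g) :
    0 ≤ FDPD φ α μ g f := by
  obtain ⟨hfm, hf1, hfA⟩ := hf
  obtain ⟨hgm, hg1, hgC⟩ := hg
  set ψ : EReal → EReal := fun x => φ (EReal.exp x) with hψ
  set A := ∫⁻ x, f x ^ (α + 1) ∂μ with hA
  set B := ∫⁻ x, f x ^ α * g x ∂μ with hB
  set C := ∫⁻ x, g x ^ (α + 1) ∂μ with hC
  have hAtop : A < ⊤ := by rwa [hA, show α + 1 = 1 + α from add_comm _ _]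
  have hCtop : C < ⊤ := by rwa [hC, show α + 1 = 1 + α from add_comm _ _]
  have hαp1 : (0:ℝ) < α + 1 := by linarith
  -- A ≠ 0 and C ≠ 0
  have key_ne : ∀ (h : ℝ → ℝ≥0∞), Measurable h → (∫⁻ x, h x ∂μ) = 1 →
      (∫⁻ x, h x ^ (α + 1) ∂μ) ≠ 0 := by
    intro h hm h1 hcon
    have hmeas : Measurable fun x => h x ^ (α + 1) :=
      ENNReal.continuous_rpow_const.measurable.comp hm
    rw [lintegral_eq_zero_iff hmeas] at hcon
    have : (∫⁻ x, h x ∂μ) = 0 := by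
      rw [lintegral_eq_zero_iff hm]
      filter_upwards [hcon] with x hx
      simp only [Pi.zero_apply] at hx ⊢
      rcases ENNReal.rpow_eq_zero_iff.1 hx with ⟨h0, _⟩ | ⟨_, hneg⟩
      · exact h0
      · linarith
    rw [h1] at this; exact one_ne_zero this
  have hA0 : A ≠ 0 := key_ne f hfm hf1
  have hC0 : C ≠ 0 := key_ne g hgm hg1
  -- Hölder
  set t : ℝ := α / (α + 1) with ht
  set s : ℝ := 1 / (α + 1) with hs
  have ht0 : 0 < t := div_pos hα hαp1
  have hs0 : 0 < s := div_pos one_pos hαp1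
  have ht1 : t < 1 := by rw [div_lt_one hαp1]; linarith
  have hpq : ((α + 1) / α).HolderConjugate (α + 1) := by
    rw [Real.holderConjugate_iff]
    constructor
    · rw [lt_div_iff₀ hα]; linarith
    · field_simp
  have holder : B ≤ A ^ t * C ^ s := by
    have hfam : AEMeasurable (fun x => f x ^ α) μ :=
      (ENNReal.continuous_rpow_const.measurable.comp hfm).aemeasurable
    have H := ENNReal.lintegral_mul_le_Lp_mul_Lq μ hpq hfam hgm.aemeasurable
    simp only [Pi.mul_apply] at H
    calc B ≤ (∫⁻ x, (f x ^ α) ^ ((α + 1) / α) ∂μ) ^ (1 / ((α + 1) / α))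
            * (∫⁻ x, g x ^ (α + 1) ∂μ) ^ (1 / (α + 1)) := H
      _ = A ^ t * C ^ s := by
          have e1 : ∀ x, (f x ^ α) ^ ((α + 1) / α) = f x ^ (α + 1) := by
            intro x
            rw [← ENNReal.rpow_mul]
            congr 1
            field_simp
          have e2 : 1 / ((α + 1) / α) = t := by rw [ht]; field_simp
          simp only [e1, e2, hA, hC, hs]
  have hBtop : B < ⊤ :=
    lt_of_le_of_lt holder
      (ENNReal.mul_lt_top (ENNReal.rpow_lt_top_of_nonneg ht0.le hAtop.ne)
        (ENNReal.rpow_lt_top_of_nonneg hs0.le hCtop.ne))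
  -- logarithms
  set ar : ℝ := Real.log A.toReal with har'
  set cr : ℝ := Real.log C.toReal with hcr'
  have har : ENNReal.log A = (ar : EReal) := ENNReal.log_pos_real hA0 hAtop.ne
  have hcr : ENNReal.log C = (cr : EReal) := ENNReal.log_pos_real hC0 hCtop.ne
  have hlogB : ENNReal.log B ≤ (t : EReal) * (ar : EReal) + (s : EReal) * (cr : EReal) := by
    calc ENNReal.log B ≤ ENNReal.log (A ^ t * C ^ s) := ENNReal.log_monotone holder
      _ = (t : EReal) * (ar : EReal) + (s : EReal) * (cr : EReal) := by
          rw [ENNReal.log_mul_add, ENNReal.log_rpow, ENNReal.log_rpow, har, hcr]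
  have hcombo : (t : EReal) * (ar : EReal) + (s : EReal) * (cr : EReal)
      = ((t * ar + s * cr : ℝ) : EReal) := by norm_cast
  -- monotonicity step
  have hmono' := hmono.monotoneOn
  have hstep1 : ψ (ENNReal.log B) ≤ ψ ((t : EReal) * (ar : EReal) + (s : EReal) * (cr : EReal)) := by
    apply hmono'
    · simp only [mem_Iio]
      rw [ENNReal.log_lt_top_iff]
      exact hBtop
    · simp only [mem_Iio, hcombo]
      exact EReal.coe_lt_top _
    · exact hlogB
  -- convexity step
  have hstep2 := hconv (ar : EReal) (EReal.coe_lt_top ar) (cr : EReal) (EReal.coe_lt_top cr)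
      t ht0 ht1
  have h1mt : (1 - t : ℝ) = s := by rw [ht, hs]; field_simp; ring
  rw [h1mt] at hstep2
  -- identify ψ values with φ values
  have hψA : ψ (ar : EReal) = φ A := by
    rw [hψ]; simp only; rw [← har, ENNReal.exp_log]
  have hψC : ψ (cr : EReal) = φ C := by
    rw [hψ]; simp only; rw [← hcr, ENNReal.exp_log]
  have hψB : ψ (ENNReal.log B) = φ B := by
    rw [hψ]; simp only; rw [ENNReal.exp_log]
  -- real values
  have hpa := hreal ar
  have hpc := hreal cr
  set pa : ℝ := (φ A).toReal with hpa'
  set pc : ℝ := (φ C).toReal with hpc'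
  have hφA : φ A = (pa : EReal) := by
    rw [hpa', EReal.coe_toReal (hψA ▸ hpa.1) (hψA ▸ hpa.2)]
  have hφC : φ C = (pc : EReal) := by
    rw [hpc', EReal.coe_toReal (hψC ▸ hpc.1) (hψC ▸ hpc.2)]
  -- the key inequality on φ B
  have hkey : φ B ≤ ((t * pa + s * pc : ℝ) : EReal) := by
    calc φ B = ψ (ENNReal.log B) := hψB.symm
      _ ≤ ψ ((t : EReal) * (ar : EReal) + (s : EReal) * (cr : EReal)) := hstep1
      _ ≤ (t : EReal) * ψ (ar : EReal) + (s : EReal) * ψ (cr : EReal) := hstep2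
      _ = ((t * pa + s * pc : ℝ) : EReal) := by
          rw [hψA, hψC, hφA, hφC]; norm_cast
  -- finish
  have hFDPD : FDPD φ α μ g f
      = φ A - ((1 + 1 / α : ℝ) : EReal) * φ B + ((1 / α : ℝ) : EReal) * φ C := rfl
  rw [hFDPD, hφA, hφC]
  rcases eq_or_ne (φ B) ⊥ with hbot | hne
  · rw [hbot]
    have h2 : ((1 + 1 / α : ℝ) : EReal) * (⊥ : EReal) = ⊥ := by
      apply EReal.coe_mul_bot_of_pos
      positivity
    rw [h2, EReal.sub_bot (EReal.coe_ne_bot pa)]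
    rw [show ((1 / α : ℝ) : EReal) * (pc : EReal) = ((1 / α * pc : ℝ) : EReal) by norm_cast]
    rw [EReal.top_add_of_ne_bot (EReal.coe_ne_bot _)]
    exact le_top
  · have hneT : φ B ≠ ⊤ := by
      intro h; rw [h] at hkey
      exact (EReal.coe_lt_top _).not_ge hkey
    set rb : ℝ := (φ B).toReal with hrb'
    have hφB : φ B = (rb : EReal) := by rw [hrb', EReal.coe_toReal hneT hne]
    rw [hφB]
    rw [hφB] at hkey
    have hkeyr : rb ≤ t * pa + s * pc := by exact_mod_cast hkey
    have hfinal : (0:ℝ) ≤ pa - (1 + 1 / α) * rb + 1 / α * pc := by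
      have hc1 : (0:ℝ) < 1 + 1 / α := by positivity
      have := mul_le_mul_of_nonneg_left hkeyr hc1.le
      have he : (1 + 1 / α) * (t * pa + s * pc) = pa + 1 / α * pc := by
        rw [ht, hs]; field_simp
      nlinarith [this, he]
    calc (0 : EReal) ≤ ((pa - (1 + 1 / α) * rb + 1 / α * pc : ℝ) : EReal) := by
          exact_mod_cast hfinal
      _ = (pa : EReal) - ((1 + 1 / α : ℝ) : EReal) * (rb : EReal)
            + ((1 / α : ℝ) : EReal) * (pc : EReal) := by norm_cast
end

section
/- Fix α > 0 and let φ : [0,∞) → [-∞,∞] be such that ψ(x) := φ(e^x) is convex and strictly increasing on [-∞,∞) with ψ(ℝ) ⊆ ℝ. Then for probability densities f, g ∈ L_{μ,α}, FDPD_{φ,α}(g,f) = 0 if and only if f = g μ-almost everywhere. -/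
open MeasureTheory ENNReal Set

/-- Equality case of two-point AM-GM for nonnegative reals. -/
lemma real_geom_eq {t a b : ℝ} (ht : 0 < t) (ht1 : t < 1) (ha : 0 ≤ a) (hb : 0 ≤ b)
    (h : a ^ t * b ^ (1 - t) = t * a + (1 - t) * b) : a = b := by
  by_contra hab
  rcases ha.eq_or_lt with ha0 | ha0
  · have hb0 : 0 < b := hb.lt_of_ne (fun hh => hab (ha0.symm.trans hh))
    rw [← ha0, Real.zero_rpow ht.ne', zero_mul, mul_zero, zero_add] at h
    nlinarith
  rcases hb.eq_or_lt with hb0 | hb0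
  · rw [← hb0, Real.zero_rpow (by linarith : (1:ℝ) - t ≠ 0), mul_zero, mul_zero, add_zero] at h
    nlinarith [Real.rpow_pos_of_pos ha0 t]
  have key := strictConcaveOn_log_Ioi.2 (mem_Ioi.2 ha0) (mem_Ioi.2 hb0) hab ht
    (by linarith : (0:ℝ) < 1 - t) (by ring)
  rw [smul_eq_mul, smul_eq_mul, smul_eq_mul, smul_eq_mul, ← h,
    Real.log_mul (Real.rpow_pos_of_pos ha0 t).ne' (Real.rpow_pos_of_pos hb0 (1-t)).ne',
    Real.log_rpow ha0, Real.log_rpow hb0] at key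
  linarith

/-- Two-point AM-GM for `ℝ≥0∞` (finite case). -/
lemma ennreal_geom_le {t : ℝ} (ht : 0 < t) (ht1 : t < 1) {a b : ℝ≥0∞} (ha : a ≠ ⊤) (hb : b ≠ ⊤) :
    a ^ t * b ^ (1 - t) ≤ ENNReal.ofReal t * a + ENNReal.ofReal (1 - t) * b := by
  have h1t : (0:ℝ) ≤ 1 - t := by linarith
  rw [← ENNReal.ofReal_toReal ha, ← ENNReal.ofReal_toReal hb,
    ENNReal.ofReal_rpow_of_nonneg a.toReal_nonneg ht.le,
    ENNReal.ofReal_rpow_of_nonneg b.toReal_nonneg h1t,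
    ← ENNReal.ofReal_mul (Real.rpow_nonneg a.toReal_nonneg t),
    ← ENNReal.ofReal_mul ht.le, ← ENNReal.ofReal_mul h1t, ← ENNReal.ofReal_add
      (by positivity) (by positivity)]
  exact ENNReal.ofReal_le_ofReal <|
    Real.geom_mean_le_arith_mean2_weighted ht.le h1t a.toReal_nonneg b.toReal_nonneg (by ring)

/-- Equality case of two-point AM-GM for `ℝ≥0∞` (finite case). -/
lemma ennreal_geom_eq {t : ℝ} (ht : 0 < t) (ht1 : t < 1) {a b : ℝ≥0∞} (ha : a ≠ ⊤) (hb : b ≠ ⊤)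
    (h : a ^ t * b ^ (1 - t) = ENNReal.ofReal t * a + ENNReal.ofReal (1 - t) * b) : a = b := by
  have h1t : (0:ℝ) ≤ 1 - t := by linarith
  have hfin1 : a ^ t * b ^ (1-t) ≠ ⊤ := by
    rw [h]
    exact (ENNReal.add_ne_top).2 ⟨ENNReal.mul_ne_top ENNReal.ofReal_ne_top ha,
      ENNReal.mul_ne_top ENNReal.ofReal_ne_top hb⟩
  have := congrArg ENNReal.toReal h
  rw [ENNReal.toReal_mul, ENNReal.toReal_add (ENNReal.mul_ne_top ENNReal.ofReal_ne_top ha)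
      (ENNReal.mul_ne_top ENNReal.ofReal_ne_top hb), ENNReal.toReal_mul, ENNReal.toReal_mul,
    ENNReal.toReal_ofReal ht.le, ENNReal.toReal_ofReal h1t, ← ENNReal.toReal_rpow,
    ← ENNReal.toReal_rpow] at this
  exact (ENNReal.toReal_eq_toReal_iff' ha hb).1 (real_geom_eq ht ht1 a.toReal_nonneg b.toReal_nonneg this)

/-- Equality in Hölder's inequality for normalized densities forces a.e. equality. -/
lemma ae_eq_of_holder_eq (μ : Measure ℝ) {α : ℝ} (hα : 0 < α) {f g : ℝ → ℝ≥0∞}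
    (hfm : Measurable f) (hgm : Measurable g)
    (hf1 : ∫⁻ x, f x ∂μ = 1) (hg1 : ∫⁻ x, g x ∂μ = 1)
    (hA0 : ∫⁻ x, f x ^ (α+1) ∂μ ≠ 0) (hAtop : ∫⁻ x, f x ^ (α+1) ∂μ ≠ ⊤)
    (hC0 : ∫⁻ x, g x ^ (α+1) ∂μ ≠ 0) (hCtop : ∫⁻ x, g x ^ (α+1) ∂μ ≠ ⊤)
    (hB : ∫⁻ x, f x ^ α * g x ∂μ
        = (∫⁻ x, f x ^ (α+1) ∂μ) ^ (α/(α+1)) * (∫⁻ x, g x ^ (α+1) ∂μ) ^ (1 - α/(α+1))) :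
    f =ᵐ[μ] g := by
  have hα1 : (0:ℝ) < α + 1 := by linarith
  set A := ∫⁻ x, f x ^ (α+1) ∂μ with hA
  set C := ∫⁻ x, g x ^ (α+1) ∂μ with hC
  set t : ℝ := α / (α + 1) with htdef
  have ht : 0 < t := div_pos hα hα1
  have ht1 : t < 1 := (div_lt_one hα1).2 (by linarith)
  have htα : (α + 1) * t = α := by rw [htdef]; field_simp
  have ht1' : (α + 1) * (1 - t) = 1 := by rw [htdef]; field_simp; ring
  set F : ℝ → ℝ≥0∞ := fun x => f x ^ (α+1) * A⁻¹ with hF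
  set G : ℝ → ℝ≥0∞ := fun x => g x ^ (α+1) * C⁻¹ with hG
  have hFm : Measurable F := (hfm.pow_const _).mul_const _
  have hGm : Measurable G := (hgm.pow_const _).mul_const _
  have hAinv : A⁻¹ ≠ ⊤ := by simp [hA0]
  have hCinv : C⁻¹ ≠ ⊤ := by simp [hC0]
  have hFint : ∫⁻ x, F x ∂μ = 1 := by
    rw [hF]
    simp only
    rw [lintegral_mul_const' _ _ hAinv, ← hA, ENNReal.mul_inv_cancel hA0 hAtop]
  have hGint : ∫⁻ x, G x ∂μ = 1 := by
    rw [hG]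
    simp only
    rw [lintegral_mul_const' _ _ hCinv, ← hC, ENNReal.mul_inv_cancel hC0 hCtop]
  set D : ℝ≥0∞ := A ^ t * C ^ (1 - t) with hD
  have hAt0 : A ^ t ≠ 0 := by simp [ENNReal.rpow_eq_zero_iff, hA0, hAtop, ht, not_lt.2 ht.le]
  have hCt0 : C ^ (1-t) ≠ 0 := by
    simp [ENNReal.rpow_eq_zero_iff, hC0, hCtop, not_lt.2 (by linarith : (0:ℝ) ≤ 1 - t)]
  have hAttop : A ^ t ≠ ⊤ := ENNReal.rpow_ne_top_of_nonneg ht.le hAtop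
  have hCttop : C ^ (1-t) ≠ ⊤ := ENNReal.rpow_ne_top_of_nonneg (by linarith) hCtop
  have hD0 : D ≠ 0 := mul_ne_zero hAt0 hCt0
  have hDtop : D ≠ ⊤ := ENNReal.mul_ne_top hAttop hCttop
  have hk_eq : ∀ x, F x ^ t * G x ^ (1-t) = (f x ^ α * g x) * D⁻¹ := by
    intro x
    rw [hF, hG]
    simp only
    rw [ENNReal.mul_rpow_of_nonneg _ _ ht.le, ENNReal.mul_rpow_of_nonneg _ _ (by linarith : (0:ℝ) ≤ 1 - t),
      ← ENNReal.rpow_mul, ← ENNReal.rpow_mul, htα, ht1', ENNReal.rpow_one,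
      ENNReal.inv_rpow, ENNReal.inv_rpow, hD,
      ENNReal.mul_inv (Or.inl hAt0) (Or.inl hAttop)]
    ring
  have hkm : Measurable fun x => F x ^ t * G x ^ (1-t) :=
    (hFm.pow_const _).mul (hGm.pow_const _)
  have hkint : ∫⁻ x, F x ^ t * G x ^ (1-t) ∂μ = 1 := by
    simp_rw [hk_eq]
    rw [lintegral_mul_const' _ _ (by simp [hD0]), hB, ENNReal.mul_inv_cancel hD0 hDtop]
  have hhint : ∫⁻ x, (ENNReal.ofReal t * F x + ENNReal.ofReal (1-t) * G x) ∂μ = 1 := by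
    rw [lintegral_add_left (hFm.const_mul _), lintegral_const_mul' _ _ ENNReal.ofReal_ne_top,
      lintegral_const_mul' _ _ ENNReal.ofReal_ne_top, hFint, hGint, mul_one, mul_one,
      ← ENNReal.ofReal_add ht.le (by linarith)]
    norm_num
  have hFlt : ∀ᵐ x ∂μ, F x ≠ ⊤ := by
    filter_upwards [ae_lt_top hFm (by rw [hFint]; exact one_ne_top)] with x hx
    exact hx.ne
  have hGlt : ∀ᵐ x ∂μ, G x ≠ ⊤ := by
    filter_upwards [ae_lt_top hGm (by rw [hGint]; exact one_ne_top)] with x hx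
    exact hx.ne
  have hle : (fun x => F x ^ t * G x ^ (1-t)) ≤ᵐ[μ]
      fun x => ENNReal.ofReal t * F x + ENNReal.ofReal (1-t) * G x := by
    filter_upwards [hFlt, hGlt] with x hxF hxG
    exact ennreal_geom_le ht ht1 hxF hxG
  have hzero : ∫⁻ x, ((ENNReal.ofReal t * F x + ENNReal.ofReal (1-t) * G x)
      - F x ^ t * G x ^ (1-t)) ∂μ = 0 := by
    rw [lintegral_sub hkm (by rw [hkint]; exact one_ne_top) hle, hhint, hkint, tsub_self]
  have haezero := (lintegral_eq_zero_iff
    (((hFm.const_mul _).add (hGm.const_mul _)).sub hkm)).1 hzero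
  have hFG : F =ᵐ[μ] G := by
    filter_upwards [haezero, hle, hFlt, hGlt] with x hx0 hxle hxF hxG
    have hxeq : F x ^ t * G x ^ (1-t)
        = ENNReal.ofReal t * F x + ENNReal.ofReal (1-t) * G x := by
      have h1 : (ENNReal.ofReal t * F x + ENNReal.ofReal (1-t) * G x)
          - F x ^ t * G x ^ (1-t) = 0 := hx0
      exact le_antisymm hxle (tsub_eq_zero_iff_le.1 h1)
    exact ennreal_geom_eq ht ht1 hxF hxG hxeq
  -- from F = G a.e., deduce f = g a.e.
  set c : ℝ≥0∞ := (C⁻¹ * A) ^ (1/(α+1)) with hc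
  have hctop : c ≠ ⊤ :=
    ENNReal.rpow_ne_top_of_nonneg (by positivity) (ENNReal.mul_ne_top hCinv hAtop)
  have he1 : (α + 1) * (1/(α+1)) = 1 := by field_simp
  have hfgc : ∀ᵐ x ∂μ, f x = g x * c := by
    filter_upwards [hFG] with x hx
    have h2 : f x ^ (α+1) = g x ^ (α+1) * (C⁻¹ * A) := by
      have := congrArg (· * A) hx
      simp only [hF, hG] at this
      rw [mul_assoc, ENNReal.inv_mul_cancel hA0 hAtop, mul_one, mul_assoc] at this
      exact this
    have := congrArg (· ^ (1/(α+1))) h2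
    rw [← ENNReal.rpow_mul, he1, ENNReal.rpow_one,
      ENNReal.mul_rpow_of_nonneg _ _ (by positivity : (0:ℝ) ≤ 1/(α+1)),
      ← ENNReal.rpow_mul, he1, ENNReal.rpow_one] at this
    exact this
  have hcint : (1:ℝ≥0∞) = c := by
    rw [← hf1, lintegral_congr_ae hfgc, lintegral_mul_const' _ _ hctop, hg1, one_mul]
  filter_upwards [hfgc] with x hx
  rw [hx, ← hcint, mul_one]

lemma lintegral_rpow_ne_zero (μ : Measure ℝ) {α : ℝ} (hα : 0 < α) {f : ℝ → ℝ≥0∞}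
    (hfm : Measurable f) (hf1 : ∫⁻ x, f x ∂μ = 1) :
    ∫⁻ x, f x ^ (α+1) ∂μ ≠ 0 := by
  intro h
  have h2 := (lintegral_eq_zero_iff (hfm.pow_const (α+1))).1 h
  have hf0 : f =ᵐ[μ] 0 := by
    filter_upwards [h2] with x hx
    simp only [Pi.zero_apply] at hx ⊢
    rcases ENNReal.rpow_eq_zero_iff.1 hx with ⟨h0, _⟩ | ⟨_, hneg⟩
    · exact h0
    · linarith
  rw [lintegral_congr_ae hf0] at hf1
  simp at hf1

lemma holder_le (μ : Measure ℝ) {α : ℝ} (hα : 0 < α) {f g : ℝ → ℝ≥0∞}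
    (hfm : Measurable f) (hgm : Measurable g) :
    ∫⁻ x, f x ^ α * g x ∂μ
      ≤ (∫⁻ x, f x ^ (α+1) ∂μ) ^ (α/(α+1)) * (∫⁻ x, g x ^ (α+1) ∂μ) ^ (1 - α/(α+1)) := by
  have hα1 : (0:ℝ) < α + 1 := by linarith
  have hpq : ((α+1)/α).HolderConjugate (α+1) :=
    Real.holderConjugate_iff.2 ⟨(one_lt_div hα).2 (by linarith), by field_simp⟩
  have h := ENNReal.lintegral_mul_le_Lp_mul_Lq μ hpq
    (hfm.pow_const α).aemeasurable hgm.aemeasurable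
  simp only [Pi.mul_apply] at h
  have e1 : ∀ x : ℝ≥0∞, (x ^ α) ^ ((α+1)/α) = x ^ (α+1) := fun x => by
    rw [← ENNReal.rpow_mul]
    congr 1
    field_simp
  have e2 : 1/((α+1)/α) = α/(α+1) := one_div_div _ _
  have e3 : 1/(α+1) = 1 - α/(α+1) := by field_simp; ring
  simp_rw [e1] at h
  rw [e2, e3] at h
  exact h

/-- under the same conditions on `φ` (namely `ψ(x) = φ(eˣ)` convex and strictly
increasing on `[-∞,∞)` with `ψ(ℝ) ⊆ ℝ`), for densities `f, g ∈ L_{μ,α}` one has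
`FDPD_{φ,α}(g,f) = 0` if and only if `f = g` `μ`-a.e. -/
theorem fdpd_eq_zero_iff_of_psi_convex_strictMono
    (μ : Measure ℝ) (α : ℝ) (hα : 0 < α) (φ : ℝ≥0∞ → EReal)
    (hconv : ERealConvexOn (fun x => φ (EReal.exp x)))
    (hmono : StrictMonoOn (fun x => φ (EReal.exp x)) (Iio (⊤ : EReal)))
    (hreal : ∀ x : ℝ, φ (EReal.exp (x : EReal)) ≠ ⊤ ∧ φ (EReal.exp (x : EReal)) ≠ ⊥)
    (f g : ℝ → ℝ≥0∞) (hf : IsDensity μ α f) (hg : IsDensity μ α g) :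
    FDPD φ α μ g f = 0 ↔ f =ᵐ[μ] g := by
  obtain ⟨hfm, hf1, hfint⟩ := hf
  obtain ⟨hgm, hg1, hgint⟩ := hg
  have hα1 : (0:ℝ) < α + 1 := by linarith
  simp only [FDPD]
  set A := ∫⁻ x, f x ^ (α+1) ∂μ with hA
  set B := ∫⁻ x, f x ^ α * g x ∂μ with hB
  set C := ∫⁻ x, g x ^ (α+1) ∂μ with hC
  have hAtop : A ≠ ⊤ := by rw [hA, show α + 1 = 1 + α from add_comm _ _]; exact hfint.ne
  have hCtop : C ≠ ⊤ := by rw [hC, show α + 1 = 1 + α from add_comm _ _]; exact hgint.ne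
  have hA0 : A ≠ 0 := lintegral_rpow_ne_zero μ hα hfm hf1
  have hC0 : C ≠ 0 := lintegral_rpow_ne_zero μ hα hgm hg1
  set t : ℝ := α/(α+1) with htdef
  have ht : 0 < t := div_pos hα hα1
  have ht1 : t < 1 := (div_lt_one hα1).2 (by linarith)
  have hBle : B ≤ A ^ t * C ^ (1-t) := holder_le μ hα hfm hgm
  have hAttop : A ^ t ≠ ⊤ := ENNReal.rpow_ne_top_of_nonneg ht.le hAtop
  have hCttop : C ^ (1-t) ≠ ⊤ := ENNReal.rpow_ne_top_of_nonneg (by linarith) hCtop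
  have hBtop : B ≠ ⊤ := (hBle.trans_lt (ENNReal.mul_ne_top hAttop hCttop).lt_top).ne
  -- real values of logs
  set ar : ℝ := (ENNReal.log A).toReal with har
  set cr : ℝ := (ENNReal.log C).toReal with hcr
  have hlogA : ((ar : ℝ) : EReal) = ENNReal.log A :=
    EReal.coe_toReal (by simp [hAtop]) (by simp [hA0])
  have hlogC : ((cr : ℝ) : EReal) = ENNReal.log C :=
    EReal.coe_toReal (by simp [hCtop]) (by simp [hC0])
  -- real values of φ at A, C
  set pa : ℝ := (φ (EReal.exp (ar : EReal))).toReal with hpa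
  set pc : ℝ := (φ (EReal.exp (cr : EReal))).toReal with hpc
  have hφA : φ A = ((pa : ℝ) : EReal) := by
    rw [hpa, EReal.coe_toReal (hreal ar).1 (hreal ar).2, hlogA, ENNReal.exp_log]
  have hφC : φ C = ((pc : ℝ) : EReal) := by
    rw [hpc, EReal.coe_toReal (hreal cr).1 (hreal cr).2, hlogC, ENNReal.exp_log]
  -- the convexity chain
  have hlogD : ENNReal.log (A ^ t * C ^ (1-t))
      = (t : EReal) * (ar : EReal) + ((1 - t : ℝ) : EReal) * (cr : EReal) := by
    rw [ENNReal.log_mul_add, ENNReal.log_rpow, ENNReal.log_rpow, ← hlogA, ← hlogC]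
  have hblt : ENNReal.log B < ⊤ := by simp [hBtop, lt_top_iff_ne_top]
  have hmlt : (t : EReal) * (ar : EReal) + ((1 - t : ℝ) : EReal) * (cr : EReal) < ⊤ := by
    rw [← EReal.coe_mul, ← EReal.coe_mul, ← EReal.coe_add]
    exact EReal.coe_lt_top _
  have hb_le : ENNReal.log B ≤ (t : EReal) * (ar : EReal) + ((1 - t : ℝ) : EReal) * (cr : EReal) := by
    rw [← hlogD]
    exact ENNReal.log_monotone hBle
  have hstep1 : φ B ≤ φ (EReal.exp ((t : EReal) * (ar : EReal) + ((1 - t : ℝ) : EReal) * (cr : EReal))) := by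
    have := hmono.monotoneOn (mem_Iio.2 hblt) (mem_Iio.2 hmlt) hb_le
    simpa [ENNReal.exp_log] using this
  have hstep2 := hconv (ar : EReal) (EReal.coe_lt_top ar) (cr : EReal) (EReal.coe_lt_top cr) t ht ht1
  simp only at hstep2
  have hψar : φ (EReal.exp ((ar : ℝ) : EReal)) = ((pa : ℝ) : EReal) := by
    rw [hlogA, ENNReal.exp_log, ← hφA]  -- careful
  have hψcr : φ (EReal.exp ((cr : ℝ) : EReal)) = ((pc : ℝ) : EReal) := by
    rw [hlogC, ENNReal.exp_log, ← hφC]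
  rw [hψar, hψcr] at hstep2
  have hφB_le : φ B ≤ (((t * pa + (1-t) * pc : ℝ)) : EReal) := by
    refine hstep1.trans (hstep2.trans ?_)
    rw [← EReal.coe_mul, ← EReal.coe_mul, ← EReal.coe_add]
  have hφB_ne_top : φ B ≠ ⊤ := fun hh => (EReal.coe_lt_top _).not_ge (hh ▸ hφB_le)
  constructor
  · -- FDPD = 0 → f =ᵐ g
    intro hFD
    by_cases hbot : φ B = ⊥
    · exfalso
      rw [hφA, hφC, hbot, EReal.coe_mul_bot_of_pos (by positivity : (0:ℝ) < 1 + 1/α),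
        EReal.coe_sub_bot, ← EReal.coe_mul, EReal.top_add_coe] at hFD
      exact absurd hFD (by simp)
    · set yb : ℝ := (φ B).toReal with hyb
      have hφB : φ B = ((yb : ℝ) : EReal) := (EReal.coe_toReal hφB_ne_top hbot).symm
      rw [hφA, hφB, hφC, ← EReal.coe_mul, ← EReal.coe_mul, ← EReal.coe_sub, ← EReal.coe_add,
        EReal.coe_eq_zero] at hFD
      have hyb_le : yb ≤ t * pa + (1-t) * pc := by
        rw [hφB] at hφB_le
        exact EReal.coe_le_coe_iff.1 hφB_le
      have h1α : (0:ℝ) < 1 + 1/α := by positivity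
      have key : (1 + 1/α) * (t * pa + (1-t) * pc) = pa + (1/α) * pc := by
        rw [htdef]; field_simp; ring
      have hyb_eq : yb = t * pa + (1-t) * pc := by
        have h2 : (1 + 1/α) * yb = (1 + 1/α) * (t * pa + (1-t) * pc) := by
          rw [key]; linarith
        exact mul_left_cancel₀ h1α.ne' h2
      -- equality in the chain
      have hchain : φ B = φ (EReal.exp ((t : EReal) * (ar : EReal) + ((1 - t : ℝ) : EReal) * (cr : EReal))) := by
        refine le_antisymm hstep1 ?_
        refine hstep2.trans ?_
        rw [hφB, ← EReal.coe_mul, ← EReal.coe_mul, ← EReal.coe_add, EReal.coe_le_coe_iff]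
        linarith [hyb_eq]
      have hBeq : B = A ^ t * C ^ (1-t) := by
        have hφB' : φ (EReal.exp (ENNReal.log B)) = φ (EReal.exp ((t : EReal) * (ar : EReal) + ((1 - t : ℝ) : EReal) * (cr : EReal))) := by
          rw [ENNReal.exp_log]; exact hchain
        have := hmono.injOn (mem_Iio.2 hblt) (mem_Iio.2 hmlt) hφB'
        rw [← hlogD] at this
        exact ENNReal.log_injective this
      exact ae_eq_of_holder_eq μ hα hfm hgm hf1 hg1 hA0 hAtop hC0 hCtop (by rw [← hA, ← hB, ← hC, ← htdef]; exact hBeq)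
  · -- f =ᵐ g → FDPD = 0
    intro hfg
    have hBC : B = C := by
      rw [hB, hC]
      refine lintegral_congr_ae ?_
      filter_upwards [hfg] with x hx
      rw [hx, ENNReal.rpow_add_of_nonneg _ _ hα.le zero_le_one, ENNReal.rpow_one]
    have hAC : A = C := by
      rw [hA, hC]
      refine lintegral_congr_ae ?_
      filter_upwards [hfg] with x hx
      rw [hx]
    rw [hAC, hBC, hφC, ← EReal.coe_mul, ← EReal.coe_mul, ← EReal.coe_sub, ← EReal.coe_add,
      EReal.coe_eq_zero]
    ring
end

section
/- Fix α > 0. Let φ : [0,∞) → [-∞,∞] be such that FDPD_{φ,α} is a valid divergence on Lebesgue densities in L_{μ,α} (nonnegative, with equality to zero iff the densities agree a.e.). Then the function ψ(x) := φ(e^x) is strictly increasing on [-∞, ∞), where e^{-∞} := 0. -/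
open MeasureTheory ENNReal Set

noncomputable def unif (a b : ℝ) : ℝ → ℝ≥0∞ :=
  (Set.Ioo a b).indicator (fun _ => (ENNReal.ofReal (b - a))⁻¹)

lemma unif_meas (a b : ℝ) : Measurable (unif a b) :=
  Measurable.indicator measurable_const measurableSet_Ioo

lemma lintegral_ind_const (s : Set ℝ) (hs : MeasurableSet s) (c : ℝ≥0∞) :
    ∫⁻ x, s.indicator (fun _ => c) x ∂(volume) = c * volume s := by
  rw [lintegral_indicator hs]; simp [mul_comm]

lemma unif_lintegral {a b : ℝ} (hab : a < b) : ∫⁻ x, unif a b x ∂(volume) = 1 := by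
  rw [unif, lintegral_ind_const _ measurableSet_Ioo, Real.volume_Ioo]
  rw [ENNReal.inv_mul_cancel]
  · simp [hab]
  · exact ofReal_ne_top

lemma indicator_rpow (s : Set ℝ) (c : ℝ≥0∞) (p : ℝ) (hp : 0 < p) (x : ℝ) :
    (s.indicator (fun _ => c) x) ^ p = s.indicator (fun _ => c ^ p) x := by
  by_cases h : x ∈ s <;> simp [h, ENNReal.zero_rpow_of_pos hp]

lemma unif_lintegral_rpow {a b : ℝ} (hab : a < b) {p : ℝ} (hp : 0 < p) :
    ∫⁻ x, unif a b x ^ p ∂(volume) = ENNReal.ofReal ((b - a) ^ (1 - p)) := by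
  have hL : 0 < b - a := sub_pos.2 hab
  simp only [unif, indicator_rpow _ _ _ hp]
  rw [lintegral_ind_const _ measurableSet_Ioo, Real.volume_Ioo]
  rw [← ENNReal.ofReal_inv_of_pos hL, ← Real.rpow_neg_one (b - a),
    ENNReal.ofReal_rpow_of_pos (by positivity), ← ENNReal.ofReal_mul (by positivity)]
  congr 1
  rw [← Real.rpow_mul hL.le]
  nth_rewrite 2 [← Real.rpow_one (b - a)]
  rw [← Real.rpow_add hL]
  ring_nf

lemma unif_isDensity {a b : ℝ} (hab : a < b) {α : ℝ} (hα : 0 < α) :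
    IsDensity volume α (unif a b) := by
  refine ⟨unif_meas a b, unif_lintegral hab, ?_⟩
  rw [unif_lintegral_rpow hab (by linarith)]
  exact ofReal_lt_top

lemma unif_rpow_succ {θ α : ℝ} (hθ : 0 < θ) (hα : 0 < α) :
    ∫⁻ x, unif 0 θ x ^ (α + 1) ∂(volume) = ENNReal.ofReal (θ ^ (-α)) := by
  rw [unif_lintegral_rpow (by linarith) (by linarith)]
  norm_num

lemma unif2_rpow_succ {θ α : ℝ} (hθ : 0 < θ) (hα : 0 < α) :
    ∫⁻ x, unif θ (2 * θ) x ^ (α + 1) ∂(volume) = ENNReal.ofReal (θ ^ (-α)) := by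
  rw [unif_lintegral_rpow (by linarith) (by linarith)]
  norm_num [two_mul]

lemma cross_disjoint {θ α : ℝ} (hθ : 0 < θ) (hα : 0 < α) :
    ∫⁻ x, unif 0 θ x ^ α * unif θ (2 * θ) x ∂(volume) = 0 := by
  have : ∀ x : ℝ, unif 0 θ x ^ α * unif θ (2 * θ) x = 0 := by
    intro x
    by_cases h : x ∈ Set.Ioo θ (2 * θ)
    · have hx : x ∉ Set.Ioo (0:ℝ) θ := fun hx => absurd hx.2 (not_lt.2 h.1.le)
      simp [unif, hx, ENNReal.zero_rpow_of_pos hα]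
    · simp [unif, Set.indicator_of_notMem h]
  simp [this]

lemma cross_nested {θ η α : ℝ} (h0 : 0 < η) (hηθ : η < θ) (hα : 0 < α) :
    ∫⁻ x, unif 0 θ x ^ α * unif 0 η x ∂(volume) = ENNReal.ofReal (θ ^ (-α)) := by
  have hθ : 0 < θ := h0.trans hηθ
  have hpt : ∀ x : ℝ, unif 0 θ x ^ α * unif 0 η x =
      (Set.Ioo (0:ℝ) η).indicator
        (fun _ => (ENNReal.ofReal (θ - 0))⁻¹ ^ α * (ENNReal.ofReal (η - 0))⁻¹) x := by
    intro x
    by_cases h : x ∈ Set.Ioo (0:ℝ) η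
    · have hx : x ∈ Set.Ioo (0:ℝ) θ := ⟨h.1, h.2.trans hηθ⟩
      simp [unif, hx, h]
    · simp [unif, Set.indicator_of_notMem h, h]
  simp only [hpt]
  rw [lintegral_ind_const _ measurableSet_Ioo, Real.volume_Ioo]
  rw [mul_assoc, sub_zero, sub_zero, ENNReal.inv_mul_cancel (by simp [h0]) ofReal_ne_top,
    mul_one, ← ENNReal.ofReal_inv_of_pos hθ, ← Real.rpow_neg_one θ,
    ENNReal.ofReal_rpow_of_pos (by positivity), ← Real.rpow_mul hθ.le]
  norm_num

lemma ne_ae_of_pos_on {f g : ℝ → ℝ≥0∞} {a b : ℝ} (hab : a < b)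
    (h : ∀ x ∈ Set.Ioo a b, f x ≠ g x) : ¬ (f =ᵐ[volume] g) := by
  intro hae
  have h0 : volume {x | ¬ f x = g x} = 0 := by
    rw [← ae_iff]; exact hae
  have hsub : Set.Ioo a b ⊆ {x | ¬ f x = g x} := fun x hx => h x hx
  have := measure_mono_null hsub h0
  rw [Real.volume_Ioo] at this
  simp only [ENNReal.ofReal_eq_zero] at this
  linarith [sub_pos.2 hab]

lemma arith1 (a b : EReal) (d : ℝ) (hd : 0 < d)
    (h : 0 < a - ((1 + d : ℝ) : EReal) * b + ((d : ℝ) : EReal) * a) : b < a := by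
  induction a with
  | bot =>
    rw [EReal.coe_mul_bot_of_pos hd, EReal.add_bot] at h
    exact absurd h (by simp)
  | top =>
    induction b with
    | bot => exact bot_lt_top
    | coe r => exact EReal.coe_lt_top r
    | top =>
      rw [EReal.coe_mul_top_of_pos (by linarith), EReal.sub_top, EReal.bot_add] at h
      exact absurd h (by simp)
  | coe r =>
    induction b with
    | bot => exact bot_lt_iff_ne_bot.2 (by simp)
    | coe s =>
      rw [show ((d:ℝ):EReal) * ((r:ℝ):EReal) = ((d*r : ℝ) : EReal) by norm_cast,
        show ((1+d:ℝ):EReal) * ((s:ℝ):EReal) = (((1+d)*s : ℝ) : EReal) by norm_cast,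
        show ((r:ℝ):EReal) - (((1+d)*s:ℝ):EReal) = ((r - (1+d)*s : ℝ):EReal) by norm_cast,
        show ((r - (1+d)*s : ℝ):EReal) + ((d*r:ℝ):EReal) = ((r - (1+d)*s + d*r : ℝ):EReal) by norm_cast] at h
      have h' : (0:ℝ) < r - (1+d)*s + d*r := by exact_mod_cast h
      have : s < r := by nlinarith
      exact_mod_cast this
    | top =>
      rw [EReal.coe_mul_top_of_pos (by linarith), EReal.sub_top, EReal.bot_add] at h
      exact absurd h (by simp)

lemma arith2 (a b : EReal) (d : ℝ) (hd : 0 < d)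
    (h : 0 < a - ((1 + d : ℝ) : EReal) * a + ((d : ℝ) : EReal) * b) : a < b := by
  induction a with
  | bot =>
    induction b with
    | bot =>
      rw [EReal.coe_mul_bot_of_pos hd, EReal.add_bot] at h
      exact absurd h (by simp)
    | coe s => exact bot_lt_iff_ne_bot.2 (by simp)
    | top => exact bot_lt_top
  | top =>
    rw [EReal.coe_mul_top_of_pos (by linarith), EReal.sub_top, EReal.bot_add] at h
    exact absurd h (by simp)
  | coe r =>
    induction b with
    | bot =>
      rw [EReal.coe_mul_bot_of_pos hd, EReal.add_bot] at h
      exact absurd h (by simp)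
    | coe s =>
      rw [show ((d:ℝ):EReal) * ((s:ℝ):EReal) = ((d*s : ℝ) : EReal) by norm_cast,
        show ((1+d:ℝ):EReal) * ((r:ℝ):EReal) = (((1+d)*r : ℝ) : EReal) by norm_cast,
        show ((r:ℝ):EReal) - (((1+d)*r:ℝ):EReal) = ((r - (1+d)*r : ℝ):EReal) by norm_cast,
        show ((r - (1+d)*r : ℝ):EReal) + ((d*s:ℝ):EReal) = ((r - (1+d)*r + d*s : ℝ):EReal) by norm_cast] at h
      have h' : (0:ℝ) < r - (1+d)*r + d*s := by exact_mod_cast h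
      have : r < s := by nlinarith
      exact_mod_cast this
    | top => exact EReal.coe_lt_top r

lemma key1 {φ : ℝ≥0∞ → EReal} {α : ℝ} (hα : 0 < α)
    (hvalid : IsValidDivergence φ α volume) {θ : ℝ} (hθ : 0 < θ) :
    φ 0 < φ (ENNReal.ofReal (θ ^ (-α))) := by
  obtain ⟨hpos, hiff⟩ := hvalid (unif 0 θ) (unif θ (2*θ))
    (unif_isDensity (by linarith) hα) (unif_isDensity (by linarith) hα)
  have hne : ¬ (unif 0 θ =ᵐ[volume] unif θ (2*θ)) := by
    apply ne_ae_of_pos_on hθ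
    intro x hx
    have hx2 : x ∉ Set.Ioo θ (2*θ) := fun h => absurd hx.2 (not_lt.2 h.1.le)
    simp [unif, hx, hx2, sub_zero, hθ]
  have hlt : 0 < FDPD φ α volume (unif θ (2*θ)) (unif 0 θ) :=
    lt_of_le_of_ne hpos (fun h => hne (hiff.1 h.symm))
  rw [FDPD, unif_rpow_succ hθ hα, unif2_rpow_succ hθ hα, cross_disjoint hθ hα] at hlt
  exact arith1 _ _ (1/α) (by positivity) hlt

lemma key2 {φ : ℝ≥0∞ → EReal} {α : ℝ} (hα : 0 < α)
    (hvalid : IsValidDivergence φ α volume) {η θ : ℝ} (h0 : 0 < η) (hηθ : η < θ) :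
    φ (ENNReal.ofReal (θ ^ (-α))) < φ (ENNReal.ofReal (η ^ (-α))) := by
  have hθ : 0 < θ := h0.trans hηθ
  obtain ⟨hpos, hiff⟩ := hvalid (unif 0 θ) (unif 0 η)
    (unif_isDensity (by linarith) hα) (unif_isDensity (by linarith) hα)
  have hne : ¬ (unif 0 θ =ᵐ[volume] unif 0 η) := by
    apply ne_ae_of_pos_on hηθ
    intro x hx
    have hx1 : x ∈ Set.Ioo (0:ℝ) θ := ⟨h0.trans hx.1, hx.2⟩
    have hx2 : x ∉ Set.Ioo (0:ℝ) η := fun h => absurd h.2 (not_lt.2 hx.1.le)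
    simp [unif, hx1, hx2, sub_zero, hθ]
  have hlt : 0 < FDPD φ α volume (unif 0 η) (unif 0 θ) :=
    lt_of_le_of_ne hpos (fun h => hne (hiff.1 h.symm))
  rw [FDPD, unif_rpow_succ hθ hα, unif_rpow_succ h0 hα, cross_nested h0 hηθ hα] at hlt
  exact arith2 _ _ (1/α) (by positivity) hlt


/-- if `FDPD_{φ,α}` is a valid divergence on Lebesgue densities, then
`ψ(x) = φ(eˣ)` is strictly increasing on `[-∞,∞)` (with `e^{-∞} = 0`). -/
theorem psi_strictMono_of_valid_divergence
    (α : ℝ) (hα : 0 < α) (φ : ℝ≥0∞ → EReal)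
    (hvalid : IsValidDivergence φ α volume) :
    StrictMonoOn (fun x => φ (EReal.exp x)) (Iio (⊤ : EReal)) := by
  intro x hx y hy hxy
  have hαne : α ≠ 0 := ne_of_gt hα
  induction x with
  | top => exact absurd hx (by simp)
  | bot =>
    induction y with
    | bot => exact absurd hxy (lt_irrefl _)
    | top => exact absurd hy (by simp)
    | coe v =>
      simp only [EReal.exp_bot, EReal.exp_coe]
      have h1 : Real.exp (-v/α) ^ (-α) = Real.exp v := by
        rw [← Real.exp_mul]
        congr 1
        field_simp
      have := key1 hα hvalid (θ := Real.exp (-v/α)) (Real.exp_pos _)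
      rwa [h1] at this
  | coe u =>
    induction y with
    | bot => exact absurd hxy (by simp)
    | top => exact absurd hy (by simp)
    | coe v =>
      simp only [EReal.exp_coe]
      have huv : u < v := by exact_mod_cast hxy
      have hηθ : Real.exp (-v/α) < Real.exp (-u/α) := by
        apply Real.exp_lt_exp.2
        have : -v < -u := by linarith
        exact div_lt_div_of_pos_right this hα
      have h1 : Real.exp (-u/α) ^ (-α) = Real.exp u := by
        rw [← Real.exp_mul]; congr 1; field_simp
      have h2 : Real.exp (-v/α) ^ (-α) = Real.exp v := by
        rw [← Real.exp_mul]; congr 1; field_simp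
      have := key2 hα hvalid (Real.exp_pos (-v/α)) hηθ
      rwa [h1, h2] at this
end

section
/- Fix α > 0. Let φ : [0,∞) → [-∞,∞] be such that FDPD_{φ,α} is a valid divergence on Lebesgue densities in L_{μ,α}. Then ψ(x) := φ(e^x) satisfies: for every γ > -1/(1+α) and all real x < y, (α/(1+α)) ψ(x) + (1/(1+α)) ψ(y) > ψ((1+γ)x − γy). -/
open MeasureTheory ENNReal Set

/-! ### Auxiliary lemmas -/

lemma ereal_key (α : ℝ) (hα : 0 < α) (A B D : EReal)
    (h : 0 < A - ((1 + 1/α : ℝ) : EReal) * B + ((1/α : ℝ) : EReal) * D) :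
    B < ((α/(1+α) : ℝ) : EReal) * A + ((1/(1+α) : ℝ) : EReal) * D := by
  have h1α : (0:ℝ) < 1 + α := by linarith
  have hc : (0:ℝ) < 1 + 1/α := by positivity
  have hd : (0:ℝ) < 1/α := by positivity
  have ha : (0:ℝ) < α/(1+α) := by positivity
  have hb : (0:ℝ) < 1/(1+α) := by positivity
  have hBtop : B ≠ ⊤ := by
    rintro rfl
    rw [EReal.coe_mul_top_of_pos hc, EReal.sub_top, EReal.bot_add] at h
    exact absurd h (by simp)
  have hAbot : A ≠ ⊥ := by
    rintro rfl
    rw [EReal.bot_sub, EReal.bot_add] at h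
    exact absurd h (by simp)
  have hDbot : D ≠ ⊥ := by
    rintro rfl
    rw [EReal.coe_mul_bot_of_pos hd, EReal.add_bot] at h
    exact absurd h (by simp)
  induction A using EReal.rec with
  | bot => exact absurd rfl hAbot
  | top =>
    rw [EReal.coe_mul_top_of_pos ha, EReal.top_add_of_ne_bot (by
      induction D using EReal.rec with
      | bot => exact absurd rfl hDbot
      | top => rw [EReal.coe_mul_top_of_pos hb]; exact top_ne_bot
      | coe d => rw [← EReal.coe_mul]; exact EReal.coe_ne_bot _)]
    exact lt_top_iff_ne_top.mpr hBtop
  | coe a =>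
    induction D using EReal.rec with
    | bot => exact absurd rfl hDbot
    | top =>
      rw [EReal.coe_mul_top_of_pos hb, EReal.add_top_of_ne_bot (by
        rw [← EReal.coe_mul]; exact EReal.coe_ne_bot _)]
      exact lt_top_iff_ne_top.mpr hBtop
    | coe d =>
      induction B using EReal.rec with
      | top => exact absurd rfl hBtop
      | bot =>
        rw [← EReal.coe_mul, ← EReal.coe_mul, ← EReal.coe_add]
        exact EReal.bot_lt_coe _
      | coe b =>
        have h' : (0:ℝ) < a - (1 + 1/α) * b + (1/α) * d := by exact_mod_cast h
        have hinv : α * (1/α) = 1 := mul_one_div_cancel hα.ne'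
        have e : α * (a - (1 + 1/α)*b + (1/α)*d) = α*a - (1+α)*b + d := by
          field_simp; ring
        have key : (1+α)*b < α*a + d := by
          have := mul_pos hα h'; rw [e] at this; linarith
        have : b < α/(1+α)*a + 1/(1+α)*d := by
          rw [show α/(1+α)*a + 1/(1+α)*d = (α*a+d)/(1+α) by ring, lt_div_iff₀ h1α]
          linarith
        exact_mod_cast this

lemma lint_rpow {k p η : ℝ} (hk : 0 ≤ k) (hp : -1 < p) (hη : 0 < η) :
    ∫⁻ x in Set.Ioo (0:ℝ) η, ENNReal.ofReal (k * x ^ p)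
      = ENNReal.ofReal (k * (η ^ (p+1) / (p+1))) := by
  have hint : IntegrableOn (fun x : ℝ => k * x ^ p) (Set.Ioo 0 η) :=
    ((intervalIntegral.integrableOn_Ioo_rpow_iff hη).mpr hp).const_mul k
  have hnn : 0 ≤ᵐ[volume.restrict (Set.Ioo (0:ℝ) η)] fun x : ℝ => k * x ^ p := by
    filter_upwards [ae_restrict_mem measurableSet_Ioo] with x hx
    exact mul_nonneg hk (Real.rpow_nonneg hx.1.le p)
  rw [← ofReal_integral_eq_lintegral_ofReal hint hnn]
  congr 1
  rw [MeasureTheory.integral_const_mul, ← integral_Ioc_eq_integral_Ioo,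
    ← intervalIntegral.integral_of_le hη.le, integral_rpow (Or.inl hp),
    Real.zero_rpow (by linarith)]
  ring

/-- The family of densities `f_η(x) = (γ+1) η^{-(γ+1)} x^γ 1_{(0,η)}(x)`. -/
noncomputable def dens (γ η : ℝ) : ℝ → ℝ≥0∞ :=
  (Set.Ioo 0 η).indicator fun x => ENNReal.ofReal ((γ+1) * η ^ (-(γ+1)) * x ^ γ)

lemma dens_measurable (γ η : ℝ) : Measurable (dens γ η) := by
  unfold dens
  exact Measurable.indicator (by fun_prop) measurableSet_Ioo

lemma dens_nonneg_coef {γ η : ℝ} (hγ : -1 < γ) (hη : 0 < η) :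
    0 ≤ (γ+1) * η ^ (-(γ+1)) :=
  mul_nonneg (by linarith) (Real.rpow_nonneg hη.le _)

lemma dens_rpow_eq {γ η : ℝ} (hγ : -1 < γ) (hη : 0 < η) {s : ℝ} (hs : 0 < s) :
    (fun x => dens γ η x ^ s)
      = (Set.Ioo 0 η).indicator
          (fun x => ENNReal.ofReal (((γ+1) * η ^ (-(γ+1))) ^ s * x ^ (γ * s))) := by
  funext x
  by_cases hx : x ∈ Set.Ioo (0:ℝ) η
  · rw [dens, Set.indicator_of_mem hx, Set.indicator_of_mem hx,
      ENNReal.ofReal_rpow_of_nonneg (mul_nonneg (dens_nonneg_coef hγ hη) (Real.rpow_nonneg hx.1.le γ)) hs.le,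
      Real.mul_rpow (dens_nonneg_coef hγ hη) (Real.rpow_nonneg hx.1.le γ),
      ← Real.rpow_mul hx.1.le]
  · rw [dens, Set.indicator_of_notMem hx, Set.indicator_of_notMem hx,
      ENNReal.zero_rpow_of_pos hs]

lemma lint_dens_rpow {γ η : ℝ} (hγ : -1 < γ) (hη : 0 < η) {s : ℝ} (hs : 0 < s)
    (hq : -1 < γ * s) :
    ∫⁻ x, dens γ η x ^ s
      = ENNReal.ofReal (((γ+1) * η ^ (-(γ+1))) ^ s * (η ^ (γ*s+1) / (γ*s+1))) := by
  rw [dens_rpow_eq hγ hη hs, lintegral_indicator measurableSet_Ioo,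
    lint_rpow (Real.rpow_nonneg (dens_nonneg_coef hγ hη) s) hq hη]

lemma lint_dens_cross {γ θ τ α : ℝ} (hγ : -1 < γ) (hτ : 0 < τ) (hτθ : τ ≤ θ)
    (hα : 0 < α) (hq : -1 < γ * (α+1)) :
    ∫⁻ x, dens γ θ x ^ α * dens γ τ x
      = ENNReal.ofReal ((((γ+1) * θ ^ (-(γ+1))) ^ α * ((γ+1) * τ ^ (-(γ+1))))
          * (τ ^ (γ*(α+1)+1) / (γ*(α+1)+1))) := by
  have hθ : 0 < θ := lt_of_lt_of_le hτ hτθ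
  have hcθ := dens_nonneg_coef hγ hθ
  have hcτ := dens_nonneg_coef hγ hτ
  have key : (fun x => dens γ θ x ^ α * dens γ τ x)
      = (Set.Ioo 0 τ).indicator
          (fun x => ENNReal.ofReal ((((γ+1) * θ ^ (-(γ+1))) ^ α * ((γ+1) * τ ^ (-(γ+1))))
            * x ^ (γ * (α+1)))) := by
    funext x
    by_cases hx : x ∈ Set.Ioo (0:ℝ) τ
    · have hxθ : x ∈ Set.Ioo (0:ℝ) θ := ⟨hx.1, lt_of_lt_of_le hx.2 hτθ⟩
      have hxpos : (0:ℝ) < x := hx.1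
      rw [Set.indicator_of_mem hx, dens, dens, Set.indicator_of_mem hx,
        Set.indicator_of_mem hxθ,
        ENNReal.ofReal_rpow_of_nonneg (mul_nonneg hcθ (Real.rpow_nonneg hxpos.le γ)) hα.le,
        ← ENNReal.ofReal_mul (Real.rpow_nonneg (mul_nonneg hcθ (Real.rpow_nonneg hxpos.le γ)) α)]
      congr 1
      rw [Real.mul_rpow hcθ (Real.rpow_nonneg hxpos.le γ), ← Real.rpow_mul hxpos.le]
      rw [show γ * (α+1) = γ * α + γ by ring, Real.rpow_add hxpos]
      ring
    · simp only [dens, Set.indicator_of_notMem hx, mul_zero]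
  rw [key, lintegral_indicator measurableSet_Ioo,
    lint_rpow (mul_nonneg (Real.rpow_nonneg hcθ α) hcτ) hq hτ]

lemma dens_isDensity {γ η α : ℝ} (hγ : -1 < γ) (hη : 0 < η) (hα : 0 < α)
    (hq : -1 < γ * (1+α)) : IsDensity volume α (dens γ η) := by
  refine ⟨dens_measurable γ η, ?_, ?_⟩
  · have := lint_dens_rpow hγ hη (s := 1) one_pos (by linarith)
    simp only [ENNReal.rpow_one] at this
    rw [this, Real.rpow_one, mul_one]
    rw [show (γ+1) * η ^ (-(γ+1)) * (η ^ (γ+1) / (γ+1))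
        = (η ^ (-(γ+1)) * η ^ (γ+1)) * ((γ+1)/(γ+1)) by ring,
      ← Real.rpow_add hη, neg_add_cancel, Real.rpow_zero,
      div_self (by linarith : (γ:ℝ)+1 ≠ 0), one_mul, ENNReal.ofReal_one]
  · rw [lint_dens_rpow hγ hη (by linarith : (0:ℝ) < 1+α) (by linarith)]
    exact ENNReal.ofReal_lt_top

theorem psi_strict_inequality_of_valid_divergence_left
    (α : ℝ) (hα : 0 < α) (φ : ℝ≥0∞ → EReal)
    (hvalid : IsValidDivergence φ α volume) :
    ∀ γ : ℝ, -(1 / (1 + α)) < γ → ∀ x y : ℝ, x < y →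
      φ (EReal.exp (((1 + γ) * x - γ * y : ℝ) : EReal)) <
        ((α / (1 + α) : ℝ) : EReal) * φ (EReal.exp (x : EReal)) +
          ((1 / (1 + α) : ℝ) : EReal) * φ (EReal.exp (y : EReal)) := by
  intro γ hγ x y hxy
  have h1α : (0:ℝ) < 1 + α := by linarith
  have hfrac : (1:ℝ)/(1+α) * (1+α) = 1 := by field_simp
  have hq : -1 < γ * (1+α) := by
    have hm := mul_lt_mul_of_pos_right hγ h1α
    rw [neg_mul, hfrac] at hm
    exact hm
  have hγ1 : -1 < γ := by
    have hle : (1:ℝ)/(1+α) ≤ 1 := by rw [div_le_one h1α]; linarith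
    linarith
  have hγp : (0:ℝ) < γ + 1 := by linarith
  have hqα : -1 < γ * (α+1) := by
    have : γ * (α+1) = γ * (1+α) := by ring
    linarith
  have hD : (0:ℝ) < γ*(α+1)+1 := by linarith
  set L := Real.log ((γ+1)^(α+1) / (γ*(α+1)+1)) with hL
  have hP : (γ+1)^(α+1) = Real.exp L * (γ*(α+1)+1) := by
    rw [hL, Real.exp_log (div_pos (Real.rpow_pos_of_pos hγp _) hD)]
    field_simp
  set θ := Real.exp ((L-x)/α) with hθdef
  set τ := Real.exp ((L-y)/α) with hτdef
  have hθpos : 0 < θ := Real.exp_pos _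
  have hτpos : 0 < τ := Real.exp_pos _
  have hτθ : τ < θ := by
    rw [hθdef, hτdef]
    exact Real.exp_lt_exp.mpr (by apply div_lt_div_of_pos_right ?_ hα; linarith)
  -- the three integral computations
  have R1 : ∀ u t : ℝ,
      ((γ+1) * Real.exp ((L-t)/α) ^ (-(γ+1)))^(α+1)
        * (Real.exp ((L-t)/α) ^ (γ*(α+1)+1)/(γ*(α+1)+1)) = Real.exp t := by
    intro u t
    simp only [← Real.exp_mul, Real.mul_rpow hγp.le (Real.exp_nonneg _), hP]
    have hgen : ∀ E F G : ℝ, Real.exp E * (γ*(α+1)+1) * Real.exp F * (Real.exp G / (γ*(α+1)+1))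
        = Real.exp (E+F+G) := by
      intro E F G; rw [Real.exp_add, Real.exp_add]; field_simp
    rw [hgen, Real.exp_eq_exp]
    field_simp
    ring
  have R3 : ((γ+1) * θ ^ (-(γ+1)))^α * ((γ+1) * τ ^ (-(γ+1)))
      * (τ ^ (γ*(α+1)+1)/(γ*(α+1)+1)) = Real.exp ((1+γ)*x - γ*y) := by
    rw [hθdef, hτdef]
    have hP1 : (γ+1)^α * (γ+1) = Real.exp L * (γ*(α+1)+1) := by
      rw [← Real.rpow_add_one hγp.ne' α, hP]
    simp only [← Real.exp_mul, Real.mul_rpow hγp.le (Real.exp_nonneg _)]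
    rw [show (γ+1)^α * Real.exp ((L-x)/α * -(γ+1) * α) * ((γ+1) * Real.exp ((L-y)/α * -(γ+1)))
          * (Real.exp ((L-y)/α * (γ*(α+1)+1))/(γ*(α+1)+1))
        = ((γ+1)^α * (γ+1)) * (γ*(α+1)+1)⁻¹ * (Real.exp ((L-x)/α * -(γ+1) * α)
          * Real.exp ((L-y)/α * -(γ+1)) * Real.exp ((L-y)/α * (γ*(α+1)+1))) by ring, hP1,
      ← Real.exp_add, ← Real.exp_add]
    rw [show Real.exp L * (γ*(α+1)+1) * (γ*(α+1)+1)⁻¹ * Real.exp ((L-x)/α * -(γ+1) * α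
        + (L-y)/α * -(γ+1) + (L-y)/α * (γ*(α+1)+1))
        = Real.exp L * Real.exp ((L-x)/α * -(γ+1) * α + (L-y)/α * -(γ+1) + (L-y)/α * (γ*(α+1)+1))
        by field_simp, ← Real.exp_add, Real.exp_eq_exp]
    field_simp
    ring
  have I1 : ∫⁻ z, dens γ θ z ^ (α+1) = ENNReal.ofReal (Real.exp x) := by
    rw [lint_dens_rpow hγ1 hθpos (by linarith : (0:ℝ) < α+1) hqα]
    congr 1
    exact R1 0 x
  have I2 : ∫⁻ z, dens γ τ z ^ (α+1) = ENNReal.ofReal (Real.exp y) := by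
    rw [lint_dens_rpow hγ1 hτpos (by linarith : (0:ℝ) < α+1) hqα]
    congr 1
    exact R1 0 y
  have I3 : ∫⁻ z, dens γ θ z ^ α * dens γ τ z
      = ENNReal.ofReal (Real.exp ((1+γ)*x - γ*y)) := by
    rw [lint_dens_cross hγ1 hτpos hτθ.le hα hqα, R3]
  -- non-equality a.e.
  have hne : ¬ (dens γ θ =ᵐ[volume] dens γ τ) := by
    intro h
    have h0 : volume {z : ℝ | ¬ dens γ θ z = dens γ τ z} = 0 := ae_iff.mp h
    have hsub : Set.Ioo τ θ ⊆ {z : ℝ | ¬ dens γ θ z = dens γ τ z} := by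
      intro z hz
      have hz0 : (0:ℝ) < z := hτpos.trans hz.1
      have hzθ : z ∈ Set.Ioo 0 θ := ⟨hz0, hz.2⟩
      have hzτ : z ∉ Set.Ioo 0 τ := fun hc => absurd hz.1 (not_lt.mpr hc.2.le)
      simp only [Set.mem_setOf_eq, dens, Set.indicator_of_mem hzθ,
        Set.indicator_of_notMem hzτ]
      intro hc
      rw [ENNReal.ofReal_eq_zero] at hc
      have : 0 < (γ+1) * θ^(-(γ+1)) * z^γ :=
        mul_pos (mul_pos hγp (Real.rpow_pos_of_pos hθpos _)) (Real.rpow_pos_of_pos hz0 _)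
      linarith
    have hz : volume (Set.Ioo τ θ) = 0 := measure_mono_null hsub h0
    rw [Real.volume_Ioo, ENNReal.ofReal_eq_zero] at hz
    linarith
  -- apply validity
  have hv := hvalid (dens γ θ) (dens γ τ)
    (dens_isDensity hγ1 hθpos hα hq) (dens_isDensity hγ1 hτpos hα hq)
  have hFpos : 0 < FDPD φ α volume (dens γ τ) (dens γ θ) :=
    hv.1.lt_of_ne (fun h => hne (hv.2.mp h.symm))
  rw [FDPD, I1, I2, I3] at hFpos
  simp only [EReal.exp_coe]
  exact ereal_key α hα _ _ _ hFpos
end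

section
/- Fix α > 0. Let φ : [0,∞) → [-∞,∞] be such that FDPD_{φ,α} is a valid divergence. Then ψ(x) := φ(e^x) satisfies: for every γ > -1/(1+α) and all real x > y, (α/(1+α)) ψ(x) + (1/(1+α)) ψ(y) > ψ((1 − (γ+1)/α) x + ((γ+1)/α) y). -/
open MeasureTheory ENNReal Set

lemma ofReal_exp_rpow (s β : ℝ) :
    (ENNReal.ofReal (Real.exp s)) ^ β = ENNReal.ofReal (Real.exp (s * β)) := by
  rw [ENNReal.ofReal_rpow_of_pos (Real.exp_pos s), Real.exp_mul]

lemma ofReal_exp_mul (a b : ℝ) :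
    ENNReal.ofReal (Real.exp a) * ENNReal.ofReal (Real.exp b)
      = ENNReal.ofReal (Real.exp (a + b)) := by
  rw [← ENNReal.ofReal_mul (Real.exp_nonneg a), ← Real.exp_add]

lemma lint_two_step (a₁ b₁ a₂ b₂ : ℝ) (c₁ c₂ : ℝ≥0∞)
    (hd : Disjoint (Ico a₁ b₁) (Ico a₂ b₂)) :
    ∫⁻ z, (if z ∈ Ico a₁ b₁ then c₁ else if z ∈ Ico a₂ b₂ then c₂ else 0)
      = c₁ * ENNReal.ofReal (b₁ - a₁) + c₂ * ENNReal.ofReal (b₂ - a₂) := by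
  have heq : (fun z => if z ∈ Ico a₁ b₁ then c₁ else if z ∈ Ico a₂ b₂ then c₂ else 0)
      = fun z => (Ico a₁ b₁).indicator (fun _ => c₁) z
          + (Ico a₂ b₂).indicator (fun _ => c₂) z := by
    funext z
    by_cases h1 : z ∈ Ico a₁ b₁ <;> by_cases h2 : z ∈ Ico a₂ b₂
    · exact (Set.disjoint_left.mp hd h1 h2).elim
    · simp [h1, h2]
    · simp [h1, h2]
    · simp [h1, h2]
  rw [heq, lintegral_add_left ((measurable_const).indicator measurableSet_Ico)]
  simp only [lintegral_indicator_const measurableSet_Ico, Real.volume_Ico]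

lemma step_meas (a₁ b₁ a₂ b₂ : ℝ) (c₁ c₂ : ℝ≥0∞) :
    Measurable (fun z => if z ∈ Ico a₁ b₁ then c₁ else if z ∈ Ico a₂ b₂ then c₂ else 0) :=
  Measurable.ite measurableSet_Ico measurable_const
    (Measurable.ite measurableSet_Ico measurable_const measurable_const)

lemma step_rpow (a₁ b₁ a₂ b₂ : ℝ) (c₁ c₂ : ℝ≥0∞) (β : ℝ) (hβ : 0 < β) :
    (fun z => (if z ∈ Ico a₁ b₁ then c₁ else if z ∈ Ico a₂ b₂ then c₂ else 0) ^ β)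
      = fun z => if z ∈ Ico a₁ b₁ then c₁ ^ β else if z ∈ Ico a₂ b₂ then c₂ ^ β else 0 := by
  funext z
  by_cases h1 : z ∈ Ico a₁ b₁ <;> by_cases h2 : z ∈ Ico a₂ b₂ <;>
    simp [h1, h2, ENNReal.zero_rpow_of_pos hβ]

lemma key_ereal (α : ℝ) (hα : 0 < α) (a b c : EReal)
    (h : 0 < a - ((1 + 1/α : ℝ) : EReal) * b + ((1/α : ℝ):EReal) * c) :
    b < ((α/(1+α) : ℝ):EReal) * a + ((1/(1+α):ℝ):EReal) * c := by
  have hk : (0:ℝ) < 1 + 1/α := by positivity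
  have hd : (0:ℝ) < 1/α := by positivity
  have hr : (0:ℝ) < α/(1+α) := by positivity
  have hs : (0:ℝ) < 1/(1+α) := by positivity
  induction a using EReal.rec with
  | bot => simp [sub_eq_add_neg] at h
  | top =>
    induction c using EReal.rec with
    | bot =>
      rw [EReal.mul_bot_of_pos (by exact_mod_cast hd)] at h
      simp at h
    | top =>
      rw [EReal.mul_top_of_pos (by exact_mod_cast hr),
        EReal.mul_top_of_pos (by exact_mod_cast hs)]
      induction b using EReal.rec with
      | bot => simp
      | top =>
        rw [EReal.mul_top_of_pos (by exact_mod_cast hk)] at h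
        simp [sub_eq_add_neg] at h
      | coe b => simp
    | coe c =>
      rw [EReal.mul_top_of_pos (by exact_mod_cast hr)]
      induction b using EReal.rec with
      | bot =>
        rw [show ((1/(1+α):ℝ):EReal) * (c:EReal) = ((1/(1+α)*c : ℝ):EReal) by norm_cast,
          EReal.top_add_coe]
        exact bot_lt_top
      | top =>
        rw [EReal.mul_top_of_pos (by exact_mod_cast hk)] at h
        simp [sub_eq_add_neg] at h
      | coe b =>
        rw [show ((1/(1+α):ℝ):EReal) * (c:EReal) = ((1/(1+α)*c : ℝ):EReal) by norm_cast,
          EReal.top_add_coe]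
        exact EReal.coe_lt_top b
  | coe a =>
    induction c using EReal.rec with
    | bot =>
      rw [EReal.mul_bot_of_pos (by exact_mod_cast hd)] at h
      simp at h
    | top =>
      rw [EReal.mul_top_of_pos (by exact_mod_cast hs)]
      induction b using EReal.rec with
      | bot =>
        rw [show ((α/(1+α):ℝ):EReal) * (a:EReal) = ((α/(1+α)*a : ℝ):EReal) by norm_cast,
          EReal.coe_add_top]
        exact bot_lt_top
      | top =>
        rw [EReal.mul_top_of_pos (by exact_mod_cast hk)] at h
        simp [sub_eq_add_neg] at h
      | coe b =>
        rw [show ((α/(1+α):ℝ):EReal) * (a:EReal) = ((α/(1+α)*a : ℝ):EReal) by norm_cast,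
          EReal.coe_add_top]
        exact EReal.coe_lt_top b
    | coe c =>
      induction b using EReal.rec with
      | bot =>
        have : ((α/(1+α) : ℝ):EReal) * (a:EReal) + ((1/(1+α):ℝ):EReal) * (c:EReal)
            = ((α/(1+α)*a + 1/(1+α)*c : ℝ) : EReal) := by norm_cast
        rw [this]; exact EReal.bot_lt_coe _
      | top =>
        rw [EReal.mul_top_of_pos (by exact_mod_cast hk)] at h
        simp [sub_eq_add_neg] at h
      | coe b =>
        have h' : (0:ℝ) < a - (1 + 1/α) * b + (1/α) * c := by exact_mod_cast h
        have h1α : (0:ℝ) < 1+α := by linarith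
        have hA : 0 < α*a - (α+1)*b + c := by
          have h2 := mul_pos hα h'
          have h3 : α * (a - (1+1/α)*b + 1/α*c) = α*a - (α+1)*b + c := by
            field_simp
          linarith [h3 ▸ h2]
        have : b < α/(1+α)*a + 1/(1+α)*c := by
          rw [show α/(1+α)*a + 1/(1+α)*c = (α*a+c)/(1+α) by ring, lt_div_iff₀ h1α]
          linarith
        exact_mod_cast this

/-- if `FDPD_{φ,α}` is a valid divergence on Lebesgue densities, then
`ψ(x) = φ(eˣ)` satisfies, for every `γ > -1/(1+α)` and all reals `x > y`,
`(α/(1+α)) ψ(x) + (1/(1+α)) ψ(y) > ψ((1 − (γ+1)/α)x + ((γ+1)/α)y)`. -/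
theorem psi_strict_inequality_of_valid_divergence_right
    (α : ℝ) (hα : 0 < α) (φ : ℝ≥0∞ → EReal)
    (hvalid : IsValidDivergence φ α volume) :
    ∀ γ : ℝ, -(1 / (1 + α)) < γ → ∀ x y : ℝ, y < x →
      φ (EReal.exp (((1 - (γ + 1) / α) * x + ((γ + 1) / α) * y : ℝ) : EReal)) <
        ((α / (1 + α) : ℝ) : EReal) * φ (EReal.exp (x : EReal)) +
          ((1 / (1 + α) : ℝ) : EReal) * φ (EReal.exp (y : EReal)) := by
  intro γ hγ x y hxy
  have h1α : (0:ℝ) < 1 + α := by linarith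
  have hαne : α ≠ 0 := hα.ne'
  have h1αne : (1:ℝ) + α ≠ 0 := h1α.ne'
  set m : ℝ := (1 - (γ + 1) / α) * x + ((γ + 1) / α) * y with hm
  set ε : ℝ := α*x + y - (α+1)*m with hε
  have hεpos : 0 < ε := by
    have h2 : 0 < (1+α)*(γ+1) - α := by
      rw [show (1+α)*(γ+1) - α = (1+α)*(γ + 1/(1+α)) by field_simp; ring]
      exact mul_pos h1α (by linarith)
    have h3 : ε = ((1+α)*(γ+1) - α)/α * (x - y) := by
      rw [hε, hm]; field_simp; ring
    rw [h3]; exact mul_pos (div_pos h2 hα) (by linarith)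
  set p : ℝ := x - ε/(2*α) with hp
  set q : ℝ := (α+1)*m - α*p with hq
  have hqy : q = y - ε/2 := by rw [hq, hp, hε]; field_simp; ring
  have hpq : α*p + q = (α+1)*m := by rw [hq]; ring
  have hpx : p < x := by
    rw [hp]; have h4 : 0 < ε/(2*α) := by positivity
    linarith
  have hqy' : q < y := by rw [hqy]; linarith
  set c0 : ℝ := min ((-(1+α)-p)/α) ((-(1+α)-q)/α) - 1 with hc0
  have hpc : p + α*c0 < 0 := by
    have hmin : c0 ≤ (-(1+α)-p)/α - 1 := by
      rw [hc0]; exact sub_le_sub_right (min_le_left _ _) 1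
    have h5 : α*c0 ≤ α*((-(1+α)-p)/α - 1) := mul_le_mul_of_nonneg_left hmin hα.le
    have h6 : α*((-(1+α)-p)/α - 1) = (-(1+α)-p) - α := by field_simp
    rw [h6] at h5; linarith
  have hqc : q + α*c0 < 0 := by
    have hmin : c0 ≤ (-(1+α)-q)/α - 1 := by
      rw [hc0]; exact sub_le_sub_right (min_le_right _ _) 1
    have h5 : α*c0 ≤ α*((-(1+α)-q)/α - 1) := mul_le_mul_of_nonneg_left hmin hα.le
    have h6 : α*((-(1+α)-q)/α - 1) = (-(1+α)-q) - α := by field_simp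
    rw [h6] at h5; linarith
  set sW : ℝ := (p - c0)/(1+α) with hsW
  set sW' : ℝ := (q - c0)/(1+α) with hsW'
  have hWc : sW + c0 = (p + α*c0)/(1+α) := by rw [hsW]; field_simp; ring
  have hWc' : sW' + c0 = (q + α*c0)/(1+α) := by rw [hsW']; field_simp; ring
  set Mf : ℝ := 1 - Real.exp (sW + c0) with hMf
  set Ng : ℝ := 1 - Real.exp (sW' + c0) with hNg
  have hMfpos : 0 < Mf := by
    rw [hMf]
    have : Real.exp (sW + c0) < 1 := by
      rw [Real.exp_lt_one_iff, hWc]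
      exact div_neg_of_neg_of_pos hpc h1α
    linarith
  have hNgpos : 0 < Ng := by
    rw [hNg]
    have : Real.exp (sW' + c0) < 1 := by
      rw [Real.exp_lt_one_iff, hWc']
      exact div_neg_of_neg_of_pos hqc h1α
    linarith
  have hxp : 0 < Real.exp x - Real.exp p := sub_pos.mpr (Real.exp_lt_exp.mpr hpx)
  have hyq : 0 < Real.exp y - Real.exp q := sub_pos.mpr (Real.exp_lt_exp.mpr hqy')
  set sU : ℝ := (Real.log (Real.exp x - Real.exp p) - Real.log Mf)/α with hsU
  set l1 : ℝ := Real.log Mf - sU with hl1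
  set sV : ℝ := (Real.log (Real.exp y - Real.exp q) - Real.log Ng)/α with hsV
  set l3 : ℝ := Real.log Ng - sV with hl3
  set e1 : ℝ := Real.exp c0 with he1
  set e2 : ℝ := e1 + Real.exp l1 with he2
  set e3 : ℝ := e2 + Real.exp l3 with he3
  have hd12 : Disjoint (Ico (0:ℝ) e1) (Ico e1 e2) := Set.Ico_disjoint_Ico_same
  have hd23 : Disjoint (Ico e1 e2) (Ico e2 e3) := Set.Ico_disjoint_Ico_same
  have hd13 : Disjoint (Ico (0:ℝ) e1) (Ico e2 e3) := by
    rw [Set.disjoint_left]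
    rintro z ⟨_, hz1⟩ ⟨hz2, _⟩
    have := Real.exp_pos l1
    rw [he2] at hz2
    linarith
  set f : ℝ → ℝ≥0∞ := fun z => if z ∈ Ico (0:ℝ) e1 then ENNReal.ofReal (Real.exp sW)
    else if z ∈ Ico e1 e2 then ENNReal.ofReal (Real.exp sU) else 0 with hf_def
  set g : ℝ → ℝ≥0∞ := fun z => if z ∈ Ico (0:ℝ) e1 then ENNReal.ofReal (Real.exp sW')
    else if z ∈ Ico e2 e3 then ENNReal.ofReal (Real.exp sV) else 0 with hg_def
  -- masses
  have hfmass : ∫⁻ z, f z = 1 := by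
    rw [hf_def]
    rw [lint_two_step _ _ _ _ _ _ hd12]
    rw [show e1 - 0 = Real.exp c0 by rw [he1]; ring,
      show e2 - e1 = Real.exp l1 by rw [he2]; ring]
    rw [ofReal_exp_mul, ofReal_exp_mul]
    rw [show sU + l1 = Real.log Mf by rw [hl1]; ring, Real.exp_log hMfpos]
    rw [show Real.exp (sW + c0) = 1 - Mf by rw [hMf]; ring]
    rw [← ENNReal.ofReal_add (by linarith [Real.exp_pos (sW + c0)]) hMfpos.le]
    norm_num
  have hgmass : ∫⁻ z, g z = 1 := by
    rw [hg_def]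
    rw [lint_two_step _ _ _ _ _ _ hd13]
    rw [show e1 - 0 = Real.exp c0 by rw [he1]; ring,
      show e3 - e2 = Real.exp l3 by rw [he3]; ring]
    rw [ofReal_exp_mul, ofReal_exp_mul]
    rw [show sV + l3 = Real.log Ng by rw [hl3]; ring, Real.exp_log hNgpos]
    rw [show Real.exp (sW' + c0) = 1 - Ng by rw [hNg]; ring]
    rw [← ENNReal.ofReal_add (by linarith [Real.exp_pos (sW' + c0)]) hNgpos.le]
    norm_num
  -- power integrals
  have hfA : ∫⁻ z, f z ^ (α+1) = ENNReal.ofReal (Real.exp x) := by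
    rw [hf_def]
    have hstep := step_rpow (0:ℝ) e1 e1 e2 (ENNReal.ofReal (Real.exp sW))
      (ENNReal.ofReal (Real.exp sU)) (α+1) (by linarith)
    simp only [hstep]
    rw [lint_two_step _ _ _ _ _ _ hd12]
    rw [show e1 - 0 = Real.exp c0 by rw [he1]; ring,
      show e2 - e1 = Real.exp l1 by rw [he2]; ring]
    rw [ofReal_exp_rpow, ofReal_exp_rpow, ofReal_exp_mul, ofReal_exp_mul]
    rw [show sW*(α+1) + c0 = p by rw [hsW]; field_simp; ring]
    rw [show sU*(α+1) + l1 = Real.log (Real.exp x - Real.exp p) by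
      rw [hl1, hsU]; field_simp; ring]
    rw [Real.exp_log hxp, ← ENNReal.ofReal_add (Real.exp_nonneg p) hxp.le]
    norm_num
  have hgA : ∫⁻ z, g z ^ (α+1) = ENNReal.ofReal (Real.exp y) := by
    rw [hg_def]
    have hstep := step_rpow (0:ℝ) e1 e2 e3 (ENNReal.ofReal (Real.exp sW'))
      (ENNReal.ofReal (Real.exp sV)) (α+1) (by linarith)
    simp only [hstep]
    rw [lint_two_step _ _ _ _ _ _ hd13]
    rw [show e1 - 0 = Real.exp c0 by rw [he1]; ring,
      show e3 - e2 = Real.exp l3 by rw [he3]; ring]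
    rw [ofReal_exp_rpow, ofReal_exp_rpow, ofReal_exp_mul, ofReal_exp_mul]
    rw [show sW'*(α+1) + c0 = q by rw [hsW']; field_simp; ring]
    rw [show sV*(α+1) + l3 = Real.log (Real.exp y - Real.exp q) by
      rw [hl3, hsV]; field_simp; ring]
    rw [Real.exp_log hyq, ← ENNReal.ofReal_add (Real.exp_nonneg q) hyq.le]
    norm_num
  -- cross integral
  have hcross : ∫⁻ z, f z ^ α * g z = ENNReal.ofReal (Real.exp m) := by
    have hptw : (fun z => f z ^ α * g z) = fun z =>
        if z ∈ Ico (0:ℝ) e1 then ENNReal.ofReal (Real.exp (sW*α)) * ENNReal.ofReal (Real.exp sW')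
        else if z ∈ Ico e1 e2 then 0 else 0 := by
      funext z
      by_cases h1 : z ∈ Ico (0:ℝ) e1
      · have h2 : z ∉ Ico e1 e2 := fun h => Set.disjoint_left.mp hd12 h1 h
        have h3 : z ∉ Ico e2 e3 := fun h => Set.disjoint_left.mp hd13 h1 h
        simp only [mem_Ico] at h1 h2 h3
        simp [hf_def, hg_def, h1, h2, h3, ofReal_exp_rpow]
      · by_cases h2 : z ∈ Ico e1 e2
        · have h3 : z ∉ Ico e2 e3 := fun h => Set.disjoint_left.mp hd23 h2 h
          simp only [mem_Ico] at h1 h2 h3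
          simp [hf_def, hg_def, h1, h2, h3]
        · simp only [mem_Ico] at h1 h2
          simp [hf_def, hg_def, h1, h2, ENNReal.zero_rpow_of_pos hα]
    rw [hptw, lint_two_step _ _ _ _ _ _ hd12, zero_mul, add_zero]
    rw [show e1 - 0 = Real.exp c0 by rw [he1]; ring]
    rw [ofReal_exp_mul, ofReal_exp_mul]
    congr 1
    rw [show sW*α + sW' + c0 = m from ?_]
    rw [hsW, hsW']
    field_simp
    linarith [hpq]
  -- densities
  have hfIsD : IsDensity volume α f := by
    refine ⟨?_, hfmass, ?_⟩
    · rw [hf_def]; exact step_meas _ _ _ _ _ _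
    · rw [show (1:ℝ) + α = α + 1 by ring, hfA]
      exact ENNReal.ofReal_lt_top
  have hgIsD : IsDensity volume α g := by
    refine ⟨?_, hgmass, ?_⟩
    · rw [hg_def]; exact step_meas _ _ _ _ _ _
    · rw [show (1:ℝ) + α = α + 1 by ring, hgA]
      exact ENNReal.ofReal_lt_top
  obtain ⟨hnonneg, hiff⟩ := hvalid f g hfIsD hgIsD
  have hfneg : ¬ f =ᵐ[volume] g := by
    intro hae
    have h0 : volume {z | ¬ f z = g z} = 0 := ae_iff.mp hae
    have hsub : Ico e1 e2 ⊆ {z | ¬ f z = g z} := by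
      intro z hz
      have h1 : z ∉ Ico (0:ℝ) e1 := fun h => Set.disjoint_left.mp hd12 h hz
      have h3 : z ∉ Ico e2 e3 := fun h => Set.disjoint_left.mp hd23 hz h
      simp only [mem_Ico] at h1 h3 hz
      simp [hf_def, hg_def, h1, h3, hz, (Real.exp_pos sU).not_ge]
    have hle : volume (Ico e1 e2) ≤ volume {z | ¬ f z = g z} := measure_mono hsub
    rw [h0] at hle
    have hI2 : volume (Ico e1 e2) = ENNReal.ofReal (Real.exp l1) := by
      rw [Real.volume_Ico, show e2 - e1 = Real.exp l1 by rw [he2]; ring]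
    rw [hI2] at hle
    have h00 : ENNReal.ofReal (Real.exp l1) = 0 := le_antisymm hle zero_le
    rw [ENNReal.ofReal_eq_zero] at h00
    linarith [Real.exp_pos l1]
  have hpos : 0 < FDPD φ α volume g f :=
    hnonneg.lt_of_ne (fun h => hfneg (hiff.mp h.symm))
  unfold FDPD at hpos
  rw [hfA, hgA, hcross] at hpos
  have hkey := key_ereal α hα _ _ _ hpos
  simpa [EReal.exp_coe] using hkey
end

section
/- Let λ ∈ (0,1) and ψ : ℝ → ℝ be strictly increasing. Suppose that for every n ≥ 1 and all x > y, λψ(x) + (1-λ)ψ(y) > ψ(λx + (1-λ)y − (x−y)/(αn)) for a fixed α > 0, and a symmetric family of inequalities holds for x < y. Then the left-limit function ψ(x−) := lim_{v↑x} ψ(v) satisfies λψ(x−) + (1-λ)ψ(y−) ≥ ψ((λx + (1-λ)y)−) for all x, y ∈ ℝ, i.e., ψ(·−) is λ-convex. -/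
open Set Filter

/-- Let `λ = α/(1+α) ∈ (0,1)` and `ψ : ℝ → ℝ` strictly increasing. If for every
`n ≥ 1` and all `x ≠ y` the strict perturbed inequality
`λψ(x) + (1-λ)ψ(y) > ψ(λx + (1-λ)y − |x−y|/(αn))` holds, then the left-limit function
`g(x) = ψ(x−)` is `λ`-convex: `λ g(x) + (1-λ) g(y) ≥ g(λx + (1-λ)y)`. -/
theorem left_limit_lambda_convex
    (α lam : ℝ) (hα : 0 < α) (hlam : lam = α / (1 + α))
    (ψ g : ℝ → ℝ) (hψ : StrictMono ψ)
    (hineq : ∀ n : ℕ, 0 < n → ∀ x y : ℝ, x ≠ y →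
      ψ (lam * x + (1 - lam) * y - |x - y| / (α * n)) < lam * ψ x + (1 - lam) * ψ y)
    (hg : ∀ x : ℝ, Tendsto ψ (nhdsWithin x (Iio x)) (nhds (g x))) :
    ∀ x y : ℝ, g (lam * x + (1 - lam) * y) ≤ lam * g x + (1 - lam) * g y := by
  have h1α : 0 < 1 + α := by linarith
  have hlam0 : 0 < lam := by rw [hlam]; positivity
  have hlam1 : lam < 1 := by
    rw [hlam, div_lt_one h1α]; linarith
  have hψle : ∀ x' x : ℝ, x' < x → ψ x' ≤ g x := by
    intro x' x hx
    refine ge_of_tendsto (hg x) ?_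
    filter_upwards [Ioo_mem_nhdsLT_of_mem (by simp [hx] : x ∈ Set.Ioc x' x)] with t ht
    exact (hψ ht.1).le
  intro x y
  rcases eq_or_ne x y with rfl | hxy
  · have hx : lam * x + (1 - lam) * x = x := by ring
    rw [hx]; linarith
  set z := lam * x + (1 - lam) * y with hz
  have key : ∀ t, t < z → ψ t ≤ lam * g x + (1 - lam) * g y := by
    intro t ht
    set δ := (z - t) / 2 with hδ
    have hδ0 : 0 < δ := by simp only [hδ]; linarith
    have hc0 : 0 < |x - y| := abs_pos.mpr (sub_ne_zero.mpr hxy)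
    obtain ⟨n, hn⟩ := exists_nat_gt (|x - y| / (α * δ))
    have hn0 : 0 < n := by
      have h0 : (0 : ℝ) < |x - y| / (α * δ) := by positivity
      exact_mod_cast h0.trans hn
    have hne : x - δ ≠ y - δ := fun h => hxy (by linarith [sub_left_inj.mp h])
    have h2 := hineq n hn0 (x - δ) (y - δ) hne
    have habs : |(x - δ) - (y - δ)| = |x - y| := by norm_num
    have hns : (0 : ℝ) < (n : ℝ) := by exact_mod_cast hn0
    have harg : lam * (x - δ) + (1 - lam) * (y - δ) - |(x - δ) - (y - δ)| / (α * n)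
        = z - δ - |x - y| / (α * n) := by rw [habs]; simp only [hz]; ring
    have hsmall : |x - y| / (α * n) < δ := by
      rw [div_lt_iff₀ (by positivity)]
      have := (div_lt_iff₀ (by positivity : (0:ℝ) < α * δ)).mp hn
      nlinarith
    rw [harg] at h2
    have htlt : t < z - δ - |x - y| / (α * n) := by
      have : t = z - 2 * δ := by simp only [hδ]; ring
      linarith
    have h3 : ψ t < lam * ψ (x - δ) + (1 - lam) * ψ (y - δ) := (hψ htlt).trans h2
    have h4 := hψle (x - δ) x (by linarith)
    have h5 := hψle (y - δ) y (by linarith)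
    nlinarith
  refine le_of_tendsto (hg z) ?_
  filter_upwards [self_mem_nhdsWithin] with t ht
  exact key t ht
end

section
/- Fix α > 0. Let φ : [0,∞) → [-∞,∞] and suppose FDPD_{φ,α}(g,f) := φ(∫ f^{α+1}) − (1+1/α)φ(∫ f^α g) + (1/α)φ(∫ g^{α+1}) is a valid divergence on the class of Lebesgue probability densities with finite (1+α)-th power integral (nonnegative, zero iff f = g a.e.). Then ψ(x) := φ(e^x) is convex and strictly increasing on [-∞, ∞) and ψ(ℝ) ⊆ ℝ. No continuity or smoothness of φ is assumed. -/
open MeasureTheory ENNReal Set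

-- Auxiliary real-analysis: fixed-weight convexity + monotonicity implies convexity

def SGood (ψ : ℝ → ℝ) (t : ℝ) : Prop :=
  ∀ u w v : ℝ, v < t*u + (1-t)*w → ψ v ≤ t * ψ u + (1-t) * ψ w

lemma sgood_one {ψ : ℝ → ℝ} (hmono : Monotone ψ) : SGood ψ 1 := by
  intro u w v hv
  have : v < u := by linarith
  have := hmono this.le
  linarith

lemma sgood_compl {ψ : ℝ → ℝ} {t : ℝ} (h : SGood ψ t) : SGood ψ (1-t) := by
  intro u w v hv
  have := h w u v (by linarith)
  linarith

lemma sgood_mul {ψ : ℝ → ℝ} {t s : ℝ} (ht : SGood ψ t) (hs : SGood ψ s) (ht0 : 0 < t) :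
    SGood ψ (t*s) := by
  intro u w v hv
  set p : ℝ := (v - (1-t)*w)/t with hp
  have hvp : v = t*p + (1-t)*w := by
    rw [hp]
    field_simp
    ring
  have hps : p < s*u + (1-s)*w := by
    rw [hp, div_lt_iff₀ ht0]
    nlinarith
  set p'' : ℝ := (p + (s*u + (1-s)*w))/2 with hp''
  have h1 : p < p'' := by rw [hp'']; linarith
  have h2 : p'' < s*u + (1-s)*w := by rw [hp'']; linarith
  have hv'' : v < t*p'' + (1-t)*w := by nlinarith
  have e1 := ht p'' w v hv''
  have e2 := hs u w p'' (by linarith)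
  nlinarith

lemma sgood_pow {ψ : ℝ → ℝ} {c : ℝ} (h : SGood ψ c) (hc : 0 < c)
    (hmono : Monotone ψ) : ∀ k : ℕ, SGood ψ (c^k) := by
  intro k
  induction k with
  | zero => simpa using sgood_one hmono
  | succ n ih => rw [pow_succ, mul_comm]; exact sgood_mul h ih hc

lemma exists_sgood_near {ψ : ℝ → ℝ} {t₀ : ℝ} (hmono : Monotone ψ)
    (h : SGood ψ t₀) (ht₀ : 0 < t₀) (ht₀1 : t₀ < 1) {t ε : ℝ} (ht : 0 < t) (ht1 : t < 1)
    (hε : 0 < ε) : ∃ s : ℝ, SGood ψ s ∧ 0 < s ∧ s ≤ t ∧ t - ε < s := by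
  -- choose n ≥ 1 with t₀^n < ε
  obtain ⟨n, hn⟩ := exists_pow_lt_of_lt_one hε ht₀1
  have hq1 : t₀ ^ (n+1) < 1 := pow_lt_one₀ ht₀.le ht₀1 (Nat.succ_ne_zero n)
  set q : ℝ := t₀ ^ (n+1) with hqdef
  have hqε : q < ε := lt_of_le_of_lt (by
    rw [hqdef, pow_succ]
    nlinarith [pow_pos ht₀ n, pow_nonneg ht₀.le n]) hn
  have hq0 : 0 < q := pow_pos ht₀ _
  set c : ℝ := 1 - q with hcdef
  have hc0 : 0 < c := by simp [hcdef]; linarith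
  have hc1 : c < 1 := by simp [hcdef]; linarith
  have hSc : SGood ψ c := by
    have := sgood_pow h ht₀ hmono (n+1)
    exact sgood_compl this
  -- minimal k with c^k ≤ t
  have hex : ∃ k : ℕ, c ^ k ≤ t := by
    obtain ⟨k, hk⟩ := exists_pow_lt_of_lt_one ht hc1
    exact ⟨k, hk.le⟩
  classical
  set k := Nat.find hex with hkdef
  have hk : c ^ k ≤ t := Nat.find_spec hex
  have hkpos : k ≠ 0 := by
    intro h0
    have := hk
    rw [h0, pow_zero] at this
    linarith
  have hkm : ¬ (c ^ (k-1) ≤ t) := Nat.find_min hex (by omega)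
  push_neg at hkm
  refine ⟨c ^ k, sgood_pow hSc hc0 hmono k, pow_pos hc0 k, hk, ?_⟩
  have hkk : c ^ k = c ^ (k-1) * c := by
    conv_lhs => rw [show k = (k-1)+1 by omega]
    rw [pow_succ]
  have hstep : c ^ (k-1) - c ^ k = c ^ (k-1) * q := by
    rw [hkk, hcdef]; ring
  have hle1 : c ^ (k-1) ≤ 1 := pow_le_one₀ hc0.le hc1.le
  nlinarith [pow_pos hc0 (k-1)]

lemma convexOn_of_sgood {ψ : ℝ → ℝ} {t₀ : ℝ} (hmono : Monotone ψ)
    (ht₀ : 0 < t₀) (ht₀1 : t₀ < 1) (h : SGood ψ t₀) : ConvexOn ℝ univ ψ := by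
  have aux : ∀ x y a : ℝ, x < y → 0 < a → a < 1 →
      ψ (a*x + (1-a)*y) ≤ a * ψ x + (1-a) * ψ y := by
    intro x y a hxy ha ha1
    obtain ⟨p, hpd⟩ : ∃ p:ℝ, p = a*x + (1-a)*y := ⟨_, rfl⟩
    obtain ⟨T, hTd⟩ : ∃ T:ℝ, T = a * ψ x + (1-a) * ψ y := ⟨_, rfl⟩
    obtain ⟨C, hCd⟩ : ∃ C:ℝ, C = ψ y - ψ x := ⟨_, rfl⟩
    suffices hle : ψ p ≤ T by rw [hpd, hTd] at hle; exact hle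
    have hC : 0 ≤ C := by rw [hCd]; linarith [hmono hxy.le]
    have key : ∀ δ : ℝ, 0 < δ → δ < a → ψ p ≤ T + δ * C := by
      intro δ hδ hδa
      obtain ⟨s, hS, hs0, hs1, hs2⟩ := exists_sgood_near hmono h ht₀ ht₀1
        (show (0:ℝ) < a - δ/2 by linarith) (show a - δ/2 < 1 by linarith)
        (show (0:ℝ) < δ/2 by linarith)
      have hsa : s < a := by linarith
      have hpv : p < s*x + (1-s)*y := by rw [hpd]; nlinarith
      have := hS x y p hpv
      have hdiff : s * ψ x + (1-s) * ψ y = T + (a - s) * C := by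
        rw [hTd, hCd]; ring
      have haδ : a - s ≤ δ := by linarith
      nlinarith
    by_contra hcon
    push_neg at hcon
    have hTp : 0 < ψ p - T := by linarith
    obtain ⟨δ, hδ0, hδa, h2⟩ : ∃ δ : ℝ, 0 < δ ∧ δ < a ∧ δ ≤ (ψ p - T)/(2*(C+1)) :=
      ⟨min (a/2) ((ψ p - T)/(2*(C+1))),
        lt_min (by linarith) (by positivity),
        lt_of_le_of_lt (min_le_left _ _) (by linarith),
        min_le_right _ _⟩
    have h1 := key δ hδ0 hδa
    have h3 : δ * C ≤ (ψ p - T)/(2*(C+1)) * C :=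
      mul_le_mul_of_nonneg_right h2 hC
    have h4 : (ψ p - T)/(2*(C+1)) * C < ψ p - T := by
      rw [div_mul_eq_mul_div, div_lt_iff₀ (by linarith)]
      nlinarith
    linarith
  constructor
  · exact convex_univ
  · intro x _ y _ a b ha hb hab
    simp only [smul_eq_mul]
    rcases eq_or_lt_of_le ha with ha0 | ha0
    · have hb1 : b = 1 := by linarith
      rw [← ha0, hb1]; simp
    rcases eq_or_lt_of_le hb with hb0 | hb0
    · have ha1 : a = 1 := by linarith
      rw [← hb0, ha1]; simp
    have hb' : b = 1 - a := by linarith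
    rcases lt_trichotomy x y with hxy | hxy | hxy
    · have := aux x y a hxy ha0 (by linarith)
      rw [hb']; linarith
    · rw [hxy, ← add_mul, hab, one_mul, ← add_mul, hab, one_mul]
    · have := aux y x b hxy hb0 (by linarith)
      have ha' : a = 1 - b := by linarith
      rw [ha']
      have e : (1-b)*x + b*y = b*y + (1-b)*x := by ring
      rw [e]
      linarith

-- Auxiliary measure-theoretic constructions

noncomputable def stepF (A B : ℝ≥0∞) (m l : ℝ) : ℝ → ℝ≥0∞ :=
  fun x => if x ∈ Ico (0:ℝ) m then A else if x ∈ Ico m (m+l) then B else 0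

lemma stepF_measurable (A B : ℝ≥0∞) (m l : ℝ) : Measurable (stepF A B m l) := by
  unfold stepF
  exact Measurable.ite measurableSet_Ico measurable_const
    (Measurable.ite measurableSet_Ico measurable_const measurable_const)

lemma stepF_lintegral (A B : ℝ≥0∞) (m l : ℝ) (hm : 0 ≤ m) (hl : 0 ≤ l) :
    ∫⁻ x, stepF A B m l x = A * ENNReal.ofReal m + B * ENNReal.ofReal l := by
  have heq : stepF A B m l = fun x =>
      (Ico (0:ℝ) m).indicator (fun _ => A) x + (Ico m (m+l)).indicator (fun _ => B) x := by
    funext x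
    simp only [stepF, indicator]
    by_cases h1 : x ∈ Ico (0:ℝ) m
    · have h2 : x ∉ Ico m (m+l) := by
        intro h2; exact absurd h2.1 (not_le.mpr h1.2)
      simp [h1, h2]
    · simp [h1]
  rw [heq, lintegral_add_left (measurable_const.indicator measurableSet_Ico),
    lintegral_indicator_const measurableSet_Ico, lintegral_indicator_const measurableSet_Ico,
    Real.volume_Ico, Real.volume_Ico]
  norm_num

lemma stepF_rpow (A B : ℝ≥0∞) (m l : ℝ) (p : ℝ) (hp : 0 < p) (x : ℝ) :
    (stepF A B m l x) ^ p = stepF (A ^ p) (B ^ p) m l x := by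
  unfold stepF; split_ifs <;> simp [ENNReal.zero_rpow_of_pos hp]

lemma stepF_mul (A B C D : ℝ≥0∞) (m l : ℝ) (x : ℝ) :
    (stepF A B m l x) * (stepF C D m l x) = stepF (A*C) (B*D) m l x := by
  unfold stepF; split_ifs <;> simp

lemma stepF_ne_ae (A B C D : ℝ≥0∞) (m l : ℝ) (hm : 0 < m) (hAC : A ≠ C) :
    ¬ (stepF A B m l =ᵐ[volume] stepF C D m l) := by
  intro h
  have h0 : volume {x | ¬ stepF A B m l x = stepF C D m l x} = 0 := h
  have hsub : Ico (0:ℝ) m ⊆ {x | ¬ stepF A B m l x = stepF C D m l x} := by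
    intro x hx
    simp only [mem_setOf_eq, stepF, if_pos hx]
    exact hAC
  have := measure_mono_null hsub h0
  rw [Real.volume_Ico] at this
  simp only [ENNReal.ofReal_eq_zero] at this
  linarith

lemma stepF_isDensity {α : ℝ} (hα : 0 < α) (A B : ℝ≥0∞) (m l : ℝ) (hm : 0 ≤ m) (hl : 0 ≤ l)
    (hA : A ≠ ⊤) (hB : B ≠ ⊤)
    (h1 : A * ENNReal.ofReal m + B * ENNReal.ofReal l = 1) :
    IsDensity volume α (stepF A B m l) := by
  refine ⟨stepF_measurable A B m l, by rw [stepF_lintegral A B m l hm hl]; exact h1, ?_⟩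
  have : ∀ x, (stepF A B m l x) ^ (1+α) = stepF (A ^ (1+α)) (B ^ (1+α)) m l x :=
    fun x => stepF_rpow A B m l (1+α) (by linarith) x
  simp only [this]
  rw [stepF_lintegral _ _ m l hm hl]
  have hA' : A ^ (1+α) < ⊤ := ENNReal.rpow_lt_top_of_nonneg (by linarith) hA
  have hB' : B ^ (1+α) < ⊤ := ENNReal.rpow_lt_top_of_nonneg (by linarith) hB
  exact ENNReal.add_lt_top.mpr ⟨ENNReal.mul_lt_top hA' ENNReal.ofReal_lt_top,
    ENNReal.mul_lt_top hB' ENNReal.ofReal_lt_top⟩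


lemma lintegral_step_rpow {a b m l : ℝ} (ha : 0 ≤ a) (hb : 0 ≤ b) (hm : 0 ≤ m) (hl : 0 ≤ l)
    {p : ℝ} (hp : 0 < p) :
    ∫⁻ x, (stepF (ENNReal.ofReal a) (ENNReal.ofReal b) m l x) ^ p
      = ENNReal.ofReal (a^p * m + b^p * l) := by
  have h1 : ∀ x, (stepF (ENNReal.ofReal a) (ENNReal.ofReal b) m l x) ^ p
      = stepF (ENNReal.ofReal (a^p)) (ENNReal.ofReal (b^p)) m l x := by
    intro x
    rw [stepF_rpow _ _ _ _ p hp x, ENNReal.ofReal_rpow_of_nonneg ha hp.le,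
      ENNReal.ofReal_rpow_of_nonneg hb hp.le]
  simp only [h1]
  rw [stepF_lintegral _ _ _ _ hm hl,
    ← ENNReal.ofReal_mul (Real.rpow_nonneg ha p),
    ← ENNReal.ofReal_mul (Real.rpow_nonneg hb p),
    ← ENNReal.ofReal_add (by positivity) (by positivity)]

lemma lintegral_step_rpow_mul {a b c d m l : ℝ} (ha : 0 ≤ a) (hb : 0 ≤ b)
    (hc : 0 ≤ c) (hd : 0 ≤ d) (hm : 0 ≤ m) (hl : 0 ≤ l) {p : ℝ} (hp : 0 < p) :
    ∫⁻ x, (stepF (ENNReal.ofReal a) (ENNReal.ofReal b) m l x) ^ p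
        * (stepF (ENNReal.ofReal c) (ENNReal.ofReal d) m l x)
      = ENNReal.ofReal (a^p * c * m + b^p * d * l) := by
  have h1 : ∀ x, (stepF (ENNReal.ofReal a) (ENNReal.ofReal b) m l x) ^ p
        * (stepF (ENNReal.ofReal c) (ENNReal.ofReal d) m l x)
      = stepF (ENNReal.ofReal (a^p * c)) (ENNReal.ofReal (b^p * d)) m l x := by
    intro x
    rw [stepF_rpow _ _ _ _ p hp x, ENNReal.ofReal_rpow_of_nonneg ha hp.le,
      ENNReal.ofReal_rpow_of_nonneg hb hp.le, stepF_mul,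
      ← ENNReal.ofReal_mul (Real.rpow_nonneg ha p),
      ← ENNReal.ofReal_mul (Real.rpow_nonneg hb p)]
  simp only [h1]
  rw [stepF_lintegral _ _ _ _ hm hl,
    ← ENNReal.ofReal_mul (by positivity),
    ← ENNReal.ofReal_mul (by positivity),
    ← ENNReal.ofReal_add (by positivity) (by positivity)]

lemma fdpd_step {φ : ℝ≥0∞ → EReal} {α : ℝ} (hα : 0 < α) {a b c d m l : ℝ}
    (ha : 0 ≤ a) (hb : 0 ≤ b) (hc : 0 ≤ c) (hd : 0 ≤ d) (hm : 0 ≤ m) (hl : 0 ≤ l) :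
    FDPD φ α volume (stepF (ENNReal.ofReal c) (ENNReal.ofReal d) m l)
        (stepF (ENNReal.ofReal a) (ENNReal.ofReal b) m l)
      = φ (ENNReal.ofReal (a^(α+1) * m + b^(α+1) * l))
        - ((1 + 1/α : ℝ) : EReal) * φ (ENNReal.ofReal (a^α * c * m + b^α * d * l))
        + ((1/α : ℝ) : EReal) * φ (ENNReal.ofReal (c^(α+1) * m + d^(α+1) * l)) := by
  unfold FDPD
  rw [lintegral_step_rpow ha hb hm hl (by linarith : (0:ℝ) < α + 1),
    lintegral_step_rpow_mul ha hb hc hd hm hl hα,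
    lintegral_step_rpow hc hd hm hl (by linarith : (0:ℝ) < α + 1)]

lemma step_isDensity' {α : ℝ} (hα : 0 < α) {a b m l : ℝ} (ha : 0 ≤ a) (hb : 0 ≤ b)
    (hm : 0 ≤ m) (hl : 0 ≤ l) (h1 : a * m + b * l = 1) :
    IsDensity volume α (stepF (ENNReal.ofReal a) (ENNReal.ofReal b) m l) := by
  apply stepF_isDensity hα _ _ m l hm hl ENNReal.ofReal_ne_top ENNReal.ofReal_ne_top
  rw [← ENNReal.ofReal_mul ha, ← ENNReal.ofReal_mul hb,
    ← ENNReal.ofReal_add (by positivity) (by positivity), h1, ENNReal.ofReal_one]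

lemma extract_le' {α x z : ℝ} (hα : 0 < α) {X : EReal}
    (h : 0 ≤ (x:EReal) - ((1 + 1/α : ℝ) : EReal) * X + ((1/α : ℝ) : EReal) * (z:EReal)) :
    X ≤ (((α * x + z)/(α+1) : ℝ) : EReal) := by
  induction X using EReal.rec with
  | bot => exact bot_le
  | top =>
    rw [EReal.coe_mul_top_of_pos (by positivity), sub_eq_add_neg] at h
    simp at h
  | coe r =>
    have h'' : 0 ≤ x - (1 + 1/α) * r + (1/α) * z := by exact_mod_cast h
    rw [EReal.coe_le_coe_iff, le_div_iff₀ (by linarith)]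
    have key : 0 ≤ α*x - (α+1)*r + z := by
      have h3 := mul_nonneg hα.le h''
      have h4 : α * (x - (1+1/α)*r + 1/α*z) = α*x - (α+1)*r + z := by
        field_simp
      linarith [h4 ▸ h3]
    linarith

lemma extract_lt' {α x : ℝ} (hα : 0 < α) {X : EReal}
    (h : 0 ≤ (x:EReal) - ((1 + 1/α : ℝ) : EReal) * X + ((1/α : ℝ) : EReal) * (x:EReal))
    (hne : (x:EReal) - ((1 + 1/α : ℝ) : EReal) * X + ((1/α : ℝ) : EReal) * (x:EReal) ≠ 0) :
    X < (x : EReal) := by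
  induction X using EReal.rec with
  | bot => exact bot_lt_iff_ne_bot.mpr (EReal.coe_ne_bot x)
  | top =>
    rw [EReal.coe_mul_top_of_pos (by positivity), sub_eq_add_neg] at h
    simp at h
  | coe r =>
    have h'' : 0 ≤ x - (1 + 1/α) * r + (1/α) * x := by exact_mod_cast h
    have hne'' : x - (1 + 1/α) * r + (1/α) * x ≠ 0 := by
      intro h0
      apply hne
      exact_mod_cast h0
    rw [EReal.coe_lt_coe_iff]
    have hlt : 0 < x - (1 + 1/α) * r + (1/α) * x := lt_of_le_of_ne h'' (Ne.symm hne'')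
    have h3 := mul_pos hα hlt
    have h4 : α * (x - (1+1/α)*r + 1/α*x) = (α+1)*(x - r) := by field_simp; ring
    nlinarith

lemma self_real' {α : ℝ} (hα : 0 < α) {X : EReal}
    (h : X - ((1 + 1/α : ℝ) : EReal) * X + ((1/α : ℝ) : EReal) * X = 0) :
    ∃ r : ℝ, X = (r : EReal) := by
  induction X using EReal.rec with
  | bot =>
    rw [EReal.coe_mul_bot_of_pos (by positivity), EReal.coe_mul_bot_of_pos (by positivity)] at h
    simp [sub_eq_add_neg] at h
  | top =>
    rw [EReal.coe_mul_top_of_pos (by positivity), EReal.coe_mul_top_of_pos (by positivity)] at h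
    simp [sub_eq_add_neg] at h
  | coe r => exact ⟨r, rfl⟩

lemma phi_real {φ : ℝ≥0∞ → EReal} {α : ℝ} (hα : 0 < α)
    (hvalid : IsValidDivergence φ α volume) {u : ℝ} (hu : 0 < u) :
    ∃ r : ℝ, φ (ENNReal.ofReal u) = (r : EReal) := by
  have hα1 : (0:ℝ) < α + 1 := by linarith
  set a := u ^ (1/α) with had
  have ha : 0 < a := Real.rpow_pos_of_pos hu _
  set m := 1/a with hmd
  have hm : 0 < m := by positivity
  have haα : a ^ α = u := by
    rw [had, ← Real.rpow_mul hu.le, one_div, inv_mul_cancel₀ hα.ne', Real.rpow_one]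
  have e1 : a^(α+1)*m + (0:ℝ)^(α+1)*(0:ℝ) = u := by
    rw [Real.zero_rpow hα1.ne', Real.rpow_add_one ha.ne' α, hmd]
    field_simp [haα]
    simp [haα]
  have e2 : a^α*a*m + (0:ℝ)^α*(0:ℝ)*(0:ℝ) = u := by
    rw [Real.zero_rpow hα.ne', hmd]
    field_simp [haα]
    simp [haα]
  have hden : IsDensity volume α (stepF (ENNReal.ofReal a) (ENNReal.ofReal 0) m 0) :=
    step_isDensity' hα ha.le le_rfl hm.le le_rfl (by rw [hmd]; field_simp; simp)
  obtain ⟨hge, hiff⟩ := hvalid _ _ hden hden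
  have h0 : FDPD φ α volume (stepF (ENNReal.ofReal a) (ENNReal.ofReal 0) m 0)
      (stepF (ENNReal.ofReal a) (ENNReal.ofReal 0) m 0) = 0 :=
    hiff.mpr Filter.EventuallyEq.rfl
  rw [fdpd_step hα ha.le le_rfl ha.le le_rfl hm.le le_rfl, e1, e2] at h0
  exact self_real' hα h0

lemma phi_lt {φ : ℝ≥0∞ → EReal} {α : ℝ} (hα : 0 < α)
    (hvalid : IsValidDivergence φ α volume) {V U : ℝ} (hV : 0 ≤ V) (hVU : V < U) :
    φ (ENNReal.ofReal V) < φ (ENNReal.ofReal U) := by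
  have hU : 0 < U := lt_of_le_of_lt hV hVU
  have hα1 : (0:ℝ) < α + 1 := by linarith
  set ρ := V / U with hρd
  have hρ0 : 0 ≤ ρ := by positivity
  have hρ1 : ρ < 1 := by rw [hρd, div_lt_one hU]; exact hVU
  -- IVT
  have hc1 : Continuous fun r : ℝ => r ^ α :=
    continuous_iff_continuousAt.mpr fun x => Real.continuousAt_rpow_const x α (Or.inr hα.le)
  have hc2 : Continuous fun r : ℝ => r ^ (α+1) :=
    continuous_iff_continuousAt.mpr fun x => Real.continuousAt_rpow_const x (α+1) (Or.inr hα1.le)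
  set g : ℝ → ℝ := fun r => r + r ^ α - ρ * (1 + r ^ (α+1)) with hgd
  have hgc : ContinuousOn g (Icc (0:ℝ) 1) :=
    ((continuous_id.add hc1).sub (continuous_const.mul (continuous_const.add hc2))).continuousOn
  have hg0 : g 0 = -ρ := by
    simp [hgd, Real.zero_rpow hα.ne', Real.zero_rpow hα1.ne']
  have hg1 : g 1 = 2 - 2*ρ := by
    simp [hgd, Real.one_rpow]
    ring
  have hmem : (0:ℝ) ∈ Icc (g 0) (g 1) := by
    rw [hg0, hg1]
    constructor <;> [linarith; linarith]
  obtain ⟨r, hr01, hgr⟩ := intermediate_value_Icc (by norm_num) hgc hmem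
  have hr0 : 0 ≤ r := hr01.1
  have hr1 : r < 1 := by
    rcases lt_or_eq_of_le hr01.2 with h | h
    · exact h
    · exfalso
      rw [h] at hgr
      rw [hg1] at hgr
      linarith
  have hIVT : r + r ^ α = ρ * (1 + r ^ (α+1)) := by
    have h' : g r = 0 := hgr
    change r + r ^ α - ρ * (1 + r ^ (α+1)) = 0 at h'
    linarith
  -- parameters
  set K := 1 + r ^ (α+1) with hKd
  have hK : 0 < K := by
    have := Real.rpow_nonneg hr0 (α+1)
    rw [hKd]; linarith
  set a := (U * (1+r) / K) ^ (1/α) with had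
  have ha : 0 < a := Real.rpow_pos_of_pos (by positivity) _
  set b := r * a with hbd
  have hb : 0 ≤ b := by positivity
  set m := 1 / (a * (1+r)) with hmd
  have hm : 0 < m := by positivity
  have haα : a ^ α = U * (1+r) / K := by
    rw [had, ← Real.rpow_mul (by positivity), one_div, inv_mul_cancel₀ hα.ne', Real.rpow_one]
  have ham : a * m = 1 / (1+r) := by
    rw [hmd]; field_simp
  have hbα : b ^ α = r ^ α * a ^ α := Real.mul_rpow hr0 ha.le
  have hbα1 : b ^ (α+1) = r ^ (α+1) * a ^ (α+1) := Real.mul_rpow hr0 ha.le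
  have haα1 : a ^ (α+1) = a ^ α * a := Real.rpow_add_one ha.ne' α
  have hden1 : a * m + b * m = 1 := by
    rw [hbd, hmd]; field_simp
  have hden2 : b * m + a * m = 1 := by linarith
  have e1 : a^(α+1)*m + b^(α+1)*m = U := by
    rw [hbα1, haα1]
    have : a ^ α * a * m + r ^ (α + 1) * (a ^ α * a) * m
        = (a ^ α) * (a * m) * K := by rw [hKd]; ring
    rw [this, haα, ham]
    field_simp
  have e3 : b^(α+1)*m + a^(α+1)*m = U := by linarith [e1]
  have e2 : a^α*b*m + b^α*a*m = V := by
    rw [hbα, hbd]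
    have : a ^ α * (r * a) * m + r ^ α * a ^ α * a * m
        = (a ^ α) * (a * m) * (r + r ^ α) := by ring
    rw [this, haα, ham, hIVT]
    rw [hρd, hKd]
    field_simp
  -- densities
  have hdF : IsDensity volume α (stepF (ENNReal.ofReal a) (ENNReal.ofReal b) m m) :=
    step_isDensity' hα ha.le hb hm.le hm.le hden1
  have hdG : IsDensity volume α (stepF (ENNReal.ofReal b) (ENNReal.ofReal a) m m) :=
    step_isDensity' hα hb ha.le hm.le hm.le hden2
  obtain ⟨hge, hiff⟩ := hvalid _ _ hdF hdG
  rw [fdpd_step hα ha.le hb hb ha.le hm.le hm.le, e1, e2, e3] at hge hiff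
  have hne : ¬ (stepF (ENNReal.ofReal a) (ENNReal.ofReal b) m m
      =ᵐ[volume] stepF (ENNReal.ofReal b) (ENNReal.ofReal a) m m) := by
    apply stepF_ne_ae _ _ _ _ m m hm
    rw [Ne, ENNReal.ofReal_eq_ofReal_iff ha.le hb]
    intro hab
    rw [hbd] at hab
    nlinarith
  have hne0 : φ (ENNReal.ofReal U) - ((1 + 1/α : ℝ) : EReal) * φ (ENNReal.ofReal V)
      + ((1/α : ℝ) : EReal) * φ (ENNReal.ofReal U) ≠ 0 := fun h0 => hne (hiff.mp h0)
  obtain ⟨xU, hxU⟩ := phi_real hα hvalid hU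
  rw [hxU] at hge hne0 ⊢
  exact extract_lt' hα hge hne0

lemma family_C {φ : ℝ≥0∞ → EReal} {α : ℝ} (hα : 0 < α)
    (hvalid : IsValidDivergence φ α volume) {x₁ x₂ x₃ : ℝ}
    (h21 : x₂ < x₁) (h13 : (α+1)*x₂ < α*x₁ + x₃) {r₁ r₃ : ℝ}
    (hr₁ : φ (ENNReal.ofReal (Real.exp x₁)) = (r₁ : EReal))
    (hr₃ : φ (ENNReal.ofReal (Real.exp x₃)) = (r₃ : EReal)) :
    φ (ENNReal.ofReal (Real.exp x₂)) ≤ (((α * r₁ + r₃)/(α+1) : ℝ) : EReal)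
    ∧ φ (ENNReal.ofReal (Real.exp (α*x₂ + (1-α)*x₁)))
        ≤ (((α * r₃ + r₁)/(α+1) : ℝ) : EReal) := by
  have hα1 : (0:ℝ) < α + 1 := by linarith
  set a := Real.exp (x₁/α) with had
  have ha : 0 < a := Real.exp_pos _
  set c := Real.exp (x₂ - x₁) * a with hcd
  have hc : 0 < c := by positivity
  set s := 1/a with hsd
  have hs : 0 < s := by positivity
  set q := 1 - Real.exp (x₂ - x₁) with hqd
  have hq : 0 < q := by
    rw [hqd]
    have := Real.exp_lt_one_iff.mpr (show x₂ - x₁ < 0 by linarith)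
    linarith
  set P := Real.exp ((α+1)*x₂ - α*x₁) with hPd
  set E := Real.exp x₃ - P with hEd
  have hE : 0 < E := by
    rw [hEd, hPd, sub_pos]
    exact Real.exp_lt_exp.mpr (by linarith)
  set m := (q^(α+1)/E) ^ (1/α) with hmd
  have hm : 0 < m := Real.rpow_pos_of_pos (by positivity) _
  set d := q / m with hdd
  have hd : 0 < d := by positivity
  -- rpow identities
  have haα : a ^ α = Real.exp x₁ := by
    rw [had, ← Real.exp_mul, div_mul_cancel₀ _ hα.ne']
  have haα1 : a ^ (α+1) = a ^ α * a := Real.rpow_add_one ha.ne' α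
  have hcα : c ^ α = Real.exp (α*x₂ + (1-α)*x₁) := by
    rw [hcd, Real.mul_rpow (Real.exp_pos _).le ha.le, ← Real.exp_mul, haα, ← Real.exp_add]
    ring_nf
  have hcα1 : c ^ (α+1) = c ^ α * c := Real.rpow_add_one hc.ne' α
  have hmα : m ^ α = q^(α+1)/E := by
    rw [hmd, ← Real.rpow_mul (by positivity), one_div, inv_mul_cancel₀ hα.ne', Real.rpow_one]
  have hdα1m : d ^ (α+1) * m = E := by
    rw [hdd, Real.div_rpow hq.le hm.le, Real.rpow_add_one hm.ne' α]
    field_simp [hmα]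
    rw [hmα, div_mul_cancel₀ _ hE.ne', add_comm]
  have hdα1m' : d ^ (α+1) * m = E := hdα1m
  -- integrals (real level)
  have e1 : a^(α+1)*s + (0:ℝ)^(α+1)*m = Real.exp x₁ := by
    rw [Real.zero_rpow hα1.ne', haα1, hsd]
    field_simp [haα]
    simp [haα]
  have e2 : a^α*c*s + (0:ℝ)^α*d*m = Real.exp x₂ := by
    rw [Real.zero_rpow hα.ne', zero_mul, zero_mul, add_zero, haα, hcd, hsd]
    rw [show Real.exp x₁ * (Real.exp (x₂ - x₁) * a) * (1 / a)
        = (Real.exp x₁ * Real.exp (x₂ - x₁)) * (a * (1/a)) from by ring,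
      mul_one_div_cancel ha.ne', mul_one, ← Real.exp_add]
    congr 1
    ring
  have ecs : c * s = Real.exp (x₂ - x₁) := by
    rw [hcd, hsd]; field_simp
  have e3 : c^(α+1)*s + d^(α+1)*m = Real.exp x₃ := by
    rw [hcα1, hdα1m]
    have : c ^ α * c * s = c ^ α * (c * s) := by ring
    rw [this, ecs, hcα, ← Real.exp_add, hEd, hPd]
    have harg : α*x₂ + (1-α)*x₁ + (x₂ - x₁) = (α+1)*x₂ - α*x₁ := by ring
    rw [harg]
    ring
  have e4 : c^α*a*s + d^α*(0:ℝ)*m = Real.exp (α*x₂ + (1-α)*x₁) := by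
    rw [hcα, hsd]
    field_simp
    simp
  -- densities
  have hdenF : a * s + 0 * m = 1 := by rw [hsd]; field_simp; simp
  have hdenG : c * s + d * m = 1 := by
    have hdm : d * m = q := by rw [hdd]; field_simp
    rw [ecs, hdm, hqd]; ring
  have hdF : IsDensity volume α (stepF (ENNReal.ofReal a) (ENNReal.ofReal 0) s m) :=
    step_isDensity' hα ha.le le_rfl hs.le hm.le hdenF
  have hdG : IsDensity volume α (stepF (ENNReal.ofReal c) (ENNReal.ofReal d) s m) :=
    step_isDensity' hα hc.le hd.le hs.le hm.le hdenG
  constructor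
  · have hge := (hvalid _ _ hdF hdG).1
    rw [fdpd_step hα ha.le le_rfl hc.le hd.le hs.le hm.le, e1, e2, e3, hr₁, hr₃] at hge
    exact extract_le' hα hge
  · have hge := (hvalid _ _ hdG hdF).1
    rw [fdpd_step hα hc.le hd.le ha.le le_rfl hs.le hm.le, e3, e4, e1, hr₃, hr₁] at hge
    exact extract_le' hα hge


lemma ereal_cases (X : EReal) : X = ⊥ ∨ (∃ r : ℝ, X = (r : EReal)) ∨ X = ⊤ := by
  induction X using EReal.rec with
  | bot => exact Or.inl rfl
  | coe r => exact Or.inr (Or.inl ⟨r, rfl⟩)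
  | top => exact Or.inr (Or.inr rfl)

/-- necessity. If `FDPD_{φ,α}` is a valid divergence on Lebesgue probability
densities (no continuity or smoothness of `φ` assumed), then `ψ(x) = φ(eˣ)` is convex and
strictly increasing on `[-∞,∞)` and maps `ℝ` into `ℝ`. -/
theorem psi_convex_strictMono_of_valid_divergence
    (α : ℝ) (hα : 0 < α) (φ : ℝ≥0∞ → EReal)
    (hvalid : IsValidDivergence φ α volume) :
    StrictMonoOn (fun x => φ (EReal.exp x)) (Iio (⊤ : EReal)) ∧
      ERealConvexOn (fun x => φ (EReal.exp x)) ∧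
      ∀ x : ℝ, φ (EReal.exp (x : EReal)) ≠ ⊤ ∧ φ (EReal.exp (x : EReal)) ≠ ⊥ := by
  have hα1 : (0:ℝ) < α + 1 := by linarith
  have ht₀ : (0:ℝ) < α/(α+1) := by positivity
  have ht₀1 : α/(α+1) < 1 := by rw [div_lt_one hα1]; linarith
  have hexists : ∀ x : ℝ, ∃ r : ℝ, φ (ENNReal.ofReal (Real.exp x)) = (r : EReal) :=
    fun x => phi_real hα hvalid (Real.exp_pos x)
  choose ψr hψr using hexists
  have hψmono : StrictMono ψr := by
    intro x y hxy
    have h := phi_lt hα hvalid (Real.exp_pos x).le (Real.exp_lt_exp.mpr hxy)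
    rw [hψr x, hψr y] at h
    exact_mod_cast h
  -- the main inequality family
  have hP0 : ∀ u w v : ℝ, (α+1)*v < α*u + w → ψr v ≤ (α * ψr u + ψr w)/(α+1) := by
    intro u w v hv'
    rcases lt_or_ge v u with hvu | huv
    · have h := (family_C hα hvalid hvu hv' (hψr u) (hψr w)).1
      rw [hψr v] at h
      exact_mod_cast h
    · have hvw : v < w := by nlinarith
      obtain ⟨x₂, hx₂⟩ : ∃ x₂ : ℝ, x₂ = (v - w)/α + w := ⟨_, rfl⟩
      have hx2 : α * x₂ = v - w + α*w := by rw [hx₂]; field_simp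
      have h21 : x₂ < w := by
        rw [hx₂]
        have : (v - w)/α < 0 := div_neg_of_neg_of_pos (by linarith) hα
        linarith
      have h13 : (α+1)*x₂ < α*w + u := by nlinarith
      have h := (family_C hα hvalid h21 h13 (hψr w) (hψr u)).2
      have harg : α*x₂ + (1-α)*w = v := by nlinarith
      rw [harg, hψr v] at h
      exact_mod_cast h
  have hP : SGood ψr (α/(α+1)) := by
    intro u w v hv
    have h1 : (1:ℝ) - α/(α+1) = 1/(α+1) := by field_simp; ring
    rw [h1] at hv ⊢
    have hv' : (α+1)*v < α*u + w := by
      calc (α+1)*v < (α+1)*(α/(α+1)*u + 1/(α+1)*w) := by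
            exact (mul_lt_mul_iff_right₀ hα1).mpr hv
        _ = α*u + w := by field_simp
    have h := hP0 u w v hv'
    have e : (α * ψr u + ψr w)/(α+1) = α/(α+1) * ψr u + 1/(α+1) * ψr w := by ring
    linarith [e ▸ h]
  have hconv := convexOn_of_sgood hψmono.monotone ht₀ ht₀1 hP
  -- φ 0 is not ⊤
  have hφ0lt : ∀ y : ℝ, φ 0 < ((ψr y : ℝ) : EReal) := by
    intro y
    have h := phi_lt hα hvalid (le_refl (0:ℝ)) (Real.exp_pos y)
    rw [ENNReal.ofReal_zero, hψr y] at h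
    exact h
  refine ⟨?_, ?_, ?_⟩
  · -- strict monotonicity
    intro x hx y hy hxy
    induction y using EReal.rec with
    | bot => exact absurd hxy (not_lt_bot)
    | top => exact absurd hy (by simp)
    | coe yr =>
      induction x using EReal.rec with
      | bot =>
        simp only [EReal.exp_bot, EReal.exp_coe]
        rw [hψr yr]
        exact hφ0lt yr
      | top => exact absurd hx (by simp)
      | coe xr =>
        simp only [EReal.exp_coe]
        exact phi_lt hα hvalid (Real.exp_pos xr).le
          (Real.exp_lt_exp.mpr (by exact_mod_cast hxy))
  · -- convexity
    intro x hx y hy t ht ht1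
    induction x using EReal.rec with
    | top => exact absurd hx (by simp)
    | bot =>
      have hcombo : (t : EReal) * (⊥:EReal) + ((1 - t : ℝ) : EReal) * y = ⊥ := by
        rw [EReal.coe_mul_bot_of_pos ht, EReal.bot_add]
      rw [hcombo]
      simp only [EReal.exp_bot]
      rcases ereal_cases (φ 0) with h0 | ⟨p, hp⟩ | h0
      · rw [h0, EReal.coe_mul_bot_of_pos ht, EReal.bot_add]
      · rw [hp]
        induction y using EReal.rec with
        | top => exact absurd hy (by simp)
        | bot =>
          simp only [EReal.exp_bot]
          rw [hp]
          have : (t : EReal) * (p:EReal) + ((1 - t : ℝ) : EReal) * (p:EReal)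
              = ((t*p + (1-t)*p : ℝ) : EReal) := by norm_cast
          rw [this]
          rw [show t*p + (1-t)*p = p by ring]
        | coe yr =>
          simp only [EReal.exp_coe]
          rw [hψr yr]
          have hplt : p < ψr yr := by
            have := hφ0lt yr
            rw [hp] at this
            exact_mod_cast this
          have : (t : EReal) * (p:EReal) + ((1 - t : ℝ) : EReal) * ((ψr yr : ℝ):EReal)
              = ((t*p + (1-t)*(ψr yr) : ℝ) : EReal) := by norm_cast
          rw [this, EReal.coe_le_coe_iff]
          nlinarith
      · exact absurd h0 (ne_top_of_lt (hφ0lt 0))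
    | coe xr =>
      induction y using EReal.rec with
      | top => exact absurd hy (by simp)
      | bot =>
        have hcombo : (t : EReal) * (xr:EReal) + ((1 - t : ℝ) : EReal) * (⊥:EReal) = ⊥ := by
          rw [EReal.coe_mul_bot_of_pos (by linarith : (0:ℝ) < 1 - t), EReal.add_bot]
        rw [hcombo]
        simp only [EReal.exp_bot, EReal.exp_coe]
        rcases ereal_cases (φ 0) with h0 | ⟨p, hp⟩ | h0
        · rw [h0, EReal.coe_mul_bot_of_pos (by linarith : (0:ℝ) < 1 - t), EReal.add_bot]
        · rw [hp, hψr xr]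
          have hplt : p < ψr xr := by
            have := hφ0lt xr
            rw [hp] at this
            exact_mod_cast this
          have : (t : EReal) * ((ψr xr : ℝ):EReal) + ((1 - t : ℝ) : EReal) * (p:EReal)
              = ((t*(ψr xr) + (1-t)*p : ℝ) : EReal) := by norm_cast
          rw [this, EReal.coe_le_coe_iff]
          nlinarith
        · exact absurd h0 (ne_top_of_lt (hφ0lt 0))
      | coe yr =>
        have hcombo : (t : EReal) * (xr:EReal) + ((1 - t : ℝ) : EReal) * (yr:EReal)
            = ((t*xr + (1-t)*yr : ℝ) : EReal) := by norm_cast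
        rw [hcombo]
        simp only [EReal.exp_coe]
        rw [hψr (t*xr + (1-t)*yr), hψr xr, hψr yr]
        have : (t : EReal) * ((ψr xr : ℝ):EReal) + ((1 - t : ℝ) : EReal) * ((ψr yr : ℝ):EReal)
            = ((t*(ψr xr) + (1-t)*(ψr yr) : ℝ) : EReal) := by norm_cast
        rw [this, EReal.coe_le_coe_iff]
        have := hconv.2 (mem_univ xr) (mem_univ yr) ht.le (by linarith : (0:ℝ) ≤ 1 - t)
          (by ring)
        simpa [smul_eq_mul] using this
  · -- finiteness
    intro x
    simp only [EReal.exp_coe]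
    rw [hψr x]
    exact ⟨EReal.coe_ne_top _, EReal.coe_ne_bot _⟩
end

section
/- For α > 0 and probability densities f, g (with respect to a measure μ on ℝ) with finite ∫ f^{1+α} dμ and ∫ g^{1+α} dμ, the logarithmic density power divergence LDPD_α(g,f) := log(∫ f^{α+1}) − (1+1/α) log(∫ f^α g) + (1/α) log(∫ g^{α+1}) is nonnegative, and equals 0 if and only if f = g μ-a.e. -/
open MeasureTheory ENNReal Set

private lemma young_eq_real {θ x y : ℝ} (hθ0 : 0 < θ) (hθ1 : θ < 1) (hx : 0 ≤ x) (hy : 0 ≤ y)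
    (h : x ^ θ * y ^ (1 - θ) = θ * x + (1 - θ) * y) : x = y := by
  by_contra hne
  rcases eq_or_lt_of_le hy with rfl | hy'
  · rcases eq_or_lt_of_le hx with rfl | hx'
    · exact hne rfl
    · rw [Real.zero_rpow (by linarith), mul_zero] at h
      nlinarith
  · have key : (x / y) ^ θ < θ * (x / y) + (1 - θ) := by
      have hs : -1 ≤ x / y - 1 := by
        have := div_nonneg hx hy'.le; linarith
      have hs' : x / y - 1 ≠ 0 := by
        intro hc
        apply hne
        have h2 : x / y = 1 := by linarith
        rw [div_eq_one_iff_eq hy'.ne'] at h2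
        exact h2
      have := rpow_one_add_lt_one_add_mul_self hs hs' hθ0 hθ1
      rw [add_sub_cancel] at this
      linarith
    have hxy : x ^ θ * y ^ (1 - θ) < (θ * (x / y) + (1 - θ)) * y := by
      have hyθ : y = y ^ θ * y ^ (1 - θ) := by
        rw [← Real.rpow_add hy']; norm_num
      have h1 : x ^ θ = (x / y) ^ θ * y ^ θ := by
        rw [Real.div_rpow hx hy'.le]; field_simp
      rw [h1]
      calc (x / y) ^ θ * y ^ θ * y ^ (1 - θ)
          < (θ * (x / y) + (1 - θ)) * (y ^ θ * y ^ (1 - θ)) := by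
            rw [← mul_assoc]
            apply mul_lt_mul_of_pos_right _ (Real.rpow_pos_of_pos hy' _)
            exact mul_lt_mul_of_pos_right key (Real.rpow_pos_of_pos hy' _)
        _ = (θ * (x / y) + (1 - θ)) * y := by rw [← hyθ]
    rw [h] at hxy
    have : (θ * (x / y) + (1 - θ)) * y = θ * x + (1 - θ) * y := by
      field_simp
    rw [this] at hxy
    exact lt_irrefl _ hxy

private lemma young_ennreal {θ : ℝ} (hθ0 : 0 < θ) (hθ1 : θ < 1) (x y : ℝ≥0∞)
    (hx : x ≠ ⊤) (hy : y ≠ ⊤) :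
    x ^ θ * y ^ (1 - θ) ≤ ENNReal.ofReal θ * x + ENNReal.ofReal (1 - θ) * y := by
  have h1θ : (0:ℝ) ≤ 1 - θ := by linarith
  rw [← ENNReal.ofReal_toReal hx, ← ENNReal.ofReal_toReal hy,
    ENNReal.ofReal_rpow_of_nonneg ENNReal.toReal_nonneg hθ0.le,
    ENNReal.ofReal_rpow_of_nonneg ENNReal.toReal_nonneg h1θ,
    ← ENNReal.ofReal_mul (by positivity), ← ENNReal.ofReal_mul hθ0.le,
    ← ENNReal.ofReal_mul h1θ, ← ENNReal.ofReal_add (by positivity) (by positivity)]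
  exact ENNReal.ofReal_le_ofReal
    (Real.geom_mean_le_arith_mean2_weighted hθ0.le h1θ ENNReal.toReal_nonneg
      ENNReal.toReal_nonneg (by ring))

private lemma young_eq_ennreal {θ : ℝ} (hθ0 : 0 < θ) (hθ1 : θ < 1) {x y : ℝ≥0∞}
    (hx : x ≠ ⊤) (hy : y ≠ ⊤)
    (h : x ^ θ * y ^ (1 - θ) = ENNReal.ofReal θ * x + ENNReal.ofReal (1 - θ) * y) : x = y := by
  have h1θ : (0:ℝ) ≤ 1 - θ := by linarith
  have hreal : x.toReal ^ θ * y.toReal ^ (1 - θ) = θ * x.toReal + (1 - θ) * y.toReal := by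
    have := congrArg ENNReal.toReal h
    rw [ENNReal.toReal_mul, ← ENNReal.toReal_rpow, ← ENNReal.toReal_rpow,
      ENNReal.toReal_add (by finiteness) (by finiteness),
      ENNReal.toReal_mul, ENNReal.toReal_mul, ENNReal.toReal_ofReal hθ0.le,
      ENNReal.toReal_ofReal h1θ] at this
    exact this
  have := young_eq_real hθ0 hθ1 ENNReal.toReal_nonneg ENNReal.toReal_nonneg hreal
  exact (ENNReal.toReal_eq_toReal_iff' hx hy).1 this


/-- the logarithmic density power divergence `LDPD_α = FDPD_{log,α}`
(with `log 0 = -∞`) is nonnegative on densities in `L_{μ,α}`, and vanishes iff the two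
densities agree `μ`-a.e. -/
theorem ldpd_nonneg_and_eq_zero_iff
    (μ : Measure ℝ) (α : ℝ) (hα : 0 < α)
    (f g : ℝ → ℝ≥0∞) (hf : IsDensity μ α f) (hg : IsDensity μ α g) :
    0 ≤ FDPD ENNReal.log α μ g f ∧ (FDPD ENNReal.log α μ g f = 0 ↔ f =ᵐ[μ] g) := by
  obtain ⟨hfm, hfint, hffin⟩ := hf
  obtain ⟨hgm, hgint, hgfin⟩ := hg
  have hα1 : (0:ℝ) < α + 1 := by linarith
  set θ : ℝ := α / (α + 1) with hθdef
  have hθ0 : 0 < θ := div_pos hα hα1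
  have hθ1 : θ < 1 := (div_lt_one hα1).2 (by linarith)
  have h1θ : 1 - θ = 1 / (α + 1) := by
    rw [hθdef]
    field_simp
    ring
  set A := ∫⁻ x, f x ^ (α + 1) ∂μ with hA
  set B := ∫⁻ x, f x ^ α * g x ∂μ with hB
  set C := ∫⁻ x, g x ^ (α + 1) ∂μ with hC
  have hFD : FDPD ENNReal.log α μ g f
      = ENNReal.log A - ((1 + 1 / α : ℝ) : EReal) * ENNReal.log B
        + ((1 / α : ℝ) : EReal) * ENNReal.log C := rfl
  have hAtop : A ≠ ⊤ := by
    rw [hA]; simp_rw [add_comm α 1]; exact hffin.ne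
  have hCtop : C ≠ ⊤ := by
    rw [hC]; simp_rw [add_comm α 1]; exact hgfin.ne
  have hA0 : A ≠ 0 := by
    intro h0
    rw [hA, lintegral_eq_zero_iff (hfm.pow_const _)] at h0
    have hz : f =ᵐ[μ] 0 := by
      filter_upwards [h0] with x hx
      have := (ENNReal.rpow_eq_zero_iff).1 hx
      rcases this with ⟨h1, _⟩ | ⟨_, h2⟩
      · exact h1
      · linarith
    rw [lintegral_congr_ae hz] at hfint
    simp at hfint
  have hC0 : C ≠ 0 := by
    intro h0
    rw [hC, lintegral_eq_zero_iff (hgm.pow_const _)] at h0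
    have hz : g =ᵐ[μ] 0 := by
      filter_upwards [h0] with x hx
      have := (ENNReal.rpow_eq_zero_iff).1 hx
      rcases this with ⟨h1, _⟩ | ⟨_, h2⟩
      · exact h1
      · linarith
    rw [lintegral_congr_ae hz] at hgint
    simp at hgint
  -- Hölder
  have hpq : Real.HolderConjugate ((α+1)/α) (α+1) :=
    ⟨by rw [inv_div, inv_one]; field_simp, by positivity, by positivity⟩
  have holder : B ≤ A ^ θ * C ^ (1 - θ) := by
    have h0 := ENNReal.lintegral_mul_le_Lp_mul_Lq μ hpq
      (hfm.pow_const α).aemeasurable hgm.aemeasurable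
    simp only [Pi.mul_apply] at h0
    calc B ≤ (∫⁻ x, (f x ^ α) ^ ((α+1)/α) ∂μ) ^ (1/((α+1)/α))
          * (∫⁻ x, g x ^ (α+1) ∂μ) ^ (1/(α+1)) := h0
      _ = A ^ θ * C ^ (1 - θ) := by
          rw [h1θ, one_div_div]
          congr 2
          apply lintegral_congr
          intro x
          rw [← ENNReal.rpow_mul]
          congr 1
          field_simp
  have hBtop : B ≠ ⊤ := by
    refine ne_top_of_le_ne_top ?_ holder
    exact ENNReal.mul_ne_top (ENNReal.rpow_ne_top_of_nonneg hθ0.le hAtop)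
      (ENNReal.rpow_ne_top_of_nonneg (by linarith) hCtop)
  have hlogCne : ((1 / α : ℝ) : EReal) * ENNReal.log C ≠ ⊥ := by
    rw [ENNReal.log_pos_real hC0 hCtop, ← EReal.coe_mul]
    exact EReal.coe_ne_bot _
  by_cases hB0 : B = 0
  · -- disjoint supports: FDPD = ⊤
    have htop : FDPD ENNReal.log α μ g f = ⊤ := by
      rw [hFD, hB0, ENNReal.log_zero, EReal.coe_mul_bot_of_pos (by positivity),
        EReal.sub_bot (by simp [hA0]), EReal.top_add_of_ne_bot hlogCne]
    refine ⟨by rw [htop]; exact le_top, ?_, ?_⟩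
    · intro h0; rw [htop] at h0; exact absurd h0 (by simp)
    · intro hfg
      exfalso
      apply hC0
      rw [← hB0, hB, hC]
      apply lintegral_congr_ae
      filter_upwards [hfg] with x hx
      have hpow : ∀ z : ℝ≥0∞, z ^ α * z = z ^ (α + 1) := fun z => by
        rw [ENNReal.rpow_add_of_nonneg _ _ hα.le zero_le_one, ENNReal.rpow_one]
      rw [hx, hpow]
  · -- all three integrals in (0,∞)
    have haR : 0 < A.toReal := ENNReal.toReal_pos hA0 hAtop
    have hbR : 0 < B.toReal := ENNReal.toReal_pos hB0 hBtop
    have hcR : 0 < C.toReal := ENNReal.toReal_pos hC0 hCtop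
    set la := Real.log A.toReal with hla
    set lb := Real.log B.toReal with hlb
    set lc := Real.log C.toReal with hlc
    have key : FDPD ENNReal.log α μ g f
        = ((la - (1 + 1/α) * lb + (1/α) * lc : ℝ) : EReal) := by
      rw [hFD, ENNReal.log_pos_real hA0 hAtop, ENNReal.log_pos_real hB0 hBtop,
        ENNReal.log_pos_real hC0 hCtop, ← EReal.coe_mul, ← EReal.coe_mul,
        ← EReal.coe_sub, ← EReal.coe_add]
    have hBr : B.toReal ≤ A.toReal ^ θ * C.toReal ^ (1 - θ) := by
      have h2 := ENNReal.toReal_mono (ENNReal.mul_ne_top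
        (ENNReal.rpow_ne_top_of_nonneg hθ0.le hAtop)
        (ENNReal.rpow_ne_top_of_nonneg (by linarith) hCtop)) holder
      rwa [ENNReal.toReal_mul, ← ENNReal.toReal_rpow, ← ENNReal.toReal_rpow] at h2
    have hlog_le : lb ≤ θ * la + (1 - θ) * lc := by
      calc lb ≤ Real.log (A.toReal ^ θ * C.toReal ^ (1-θ)) := Real.log_le_log hbR hBr
        _ = θ * la + (1 - θ) * lc := by
            rw [Real.log_mul (by positivity) (by positivity),
              Real.log_rpow haR, Real.log_rpow hcR]
    have hrw : la - (1 + 1/α) * lb + (1/α) * lc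
        = ((α+1) * ((θ * la + (1 - θ) * lc) - lb)) / α := by
      rw [hθdef]; field_simp; ring
    constructor
    · rw [key]
      have : (0:ℝ) ≤ la - (1 + 1/α) * lb + (1/α) * lc := by
        rw [hrw]
        apply div_nonneg _ hα.le
        apply mul_nonneg (by linarith)
        linarith
      exact_mod_cast this
    constructor
    · intro h0
      rw [key] at h0
      have h0' : la - (1 + 1/α) * lb + (1/α) * lc = 0 := by exact_mod_cast h0
      rw [hrw, _root_.div_eq_zero_iff] at h0'
      have heq : lb = θ * la + (1 - θ) * lc := by
        rcases h0' with h1 | h1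
        · rcases mul_eq_zero.1 h1 with h2 | h2
          · linarith
          · linarith
        · linarith
      -- equality in Hölder
      have hBeq : B = A ^ θ * C ^ (1 - θ) := by
        apply (ENNReal.toReal_eq_toReal_iff' hBtop (ENNReal.mul_ne_top
          (ENNReal.rpow_ne_top_of_nonneg hθ0.le hAtop)
          (ENNReal.rpow_ne_top_of_nonneg (by linarith) hCtop))).1
        rw [ENNReal.toReal_mul, ← ENNReal.toReal_rpow, ← ENNReal.toReal_rpow]
        have : B.toReal = Real.exp lb := (Real.exp_log hbR).symm
        rw [this, heq, Real.exp_add, Real.rpow_def_of_pos haR, Real.rpow_def_of_pos hcR,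
          mul_comm θ la, mul_comm (1-θ) lc]
      -- normalized densities
      set F : ℝ → ℝ≥0∞ := fun x => A⁻¹ * f x ^ (α+1) with hFdef
      set G : ℝ → ℝ≥0∞ := fun x => C⁻¹ * g x ^ (α+1) with hGdef
      have hFm : Measurable F := measurable_const.mul (hfm.pow_const _)
      have hGm : Measurable G := measurable_const.mul (hgm.pow_const _)
      have hAinv : A⁻¹ ≠ ⊤ := by simp [hA0]
      have hCinv : C⁻¹ ≠ ⊤ := by simp [hC0]
      have hFint : ∫⁻ x, F x ∂μ = 1 := by
        rw [hFdef]
        simp only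
        rw [lintegral_const_mul' _ _ hAinv, ← hA, ENNReal.inv_mul_cancel hA0 hAtop]
      have hGint : ∫⁻ x, G x ∂μ = 1 := by
        rw [hGdef]
        simp only
        rw [lintegral_const_mul' _ _ hCinv, ← hC, ENNReal.inv_mul_cancel hC0 hCtop]
      have hpointmix : ∀ x, F x ^ θ * G x ^ (1-θ)
          = (A⁻¹ ^ θ * C⁻¹ ^ (1-θ)) * (f x ^ α * g x) := by
        intro x
        have e1 : (f x ^ (α+1)) ^ θ = f x ^ α := by
          rw [← ENNReal.rpow_mul]; congr 1; rw [hθdef]; field_simp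
        have e2 : (g x ^ (α+1)) ^ (1-θ) = g x := by
          rw [← ENNReal.rpow_mul]
          rw [h1θ]
          rw [show (α+1) * (1/(α+1)) = 1 by field_simp, ENNReal.rpow_one]
        rw [hFdef, hGdef]
        simp only
        rw [ENNReal.mul_rpow_of_nonneg _ _ hθ0.le,
          ENNReal.mul_rpow_of_nonneg _ _ (by linarith : (0:ℝ) ≤ 1-θ), e1, e2]
        ring
      have hconst_ne_top : A⁻¹ ^ θ * C⁻¹ ^ (1-θ) ≠ ⊤ :=
        ENNReal.mul_ne_top (ENNReal.rpow_ne_top_of_nonneg hθ0.le hAinv)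
          (ENNReal.rpow_ne_top_of_nonneg (by linarith) hCinv)
      have hmix : ∫⁻ x, F x ^ θ * G x ^ (1-θ) ∂μ = 1 := by
        calc ∫⁻ x, F x ^ θ * G x ^ (1-θ) ∂μ
            = ∫⁻ x, (A⁻¹ ^ θ * C⁻¹ ^ (1-θ)) * (f x ^ α * g x) ∂μ := by
              exact lintegral_congr hpointmix
          _ = (A⁻¹ ^ θ * C⁻¹ ^ (1-θ)) * B := by
              rw [lintegral_const_mul' _ _ hconst_ne_top, ← hB]
          _ = 1 := by
              rw [hBeq, ENNReal.inv_rpow, ENNReal.inv_rpow]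
              rw [show (A ^ θ)⁻¹ * (C ^ (1-θ))⁻¹ * (A ^ θ * C ^ (1-θ))
                  = ((A ^ θ)⁻¹ * A ^ θ) * ((C ^ (1-θ))⁻¹ * C ^ (1-θ)) by ring]
              rw [ENNReal.inv_mul_cancel (by
                    simp [ENNReal.rpow_eq_zero_iff, hA0, hAtop, hθ0.le])
                  (ENNReal.rpow_ne_top_of_nonneg hθ0.le hAtop),
                ENNReal.inv_mul_cancel (by
                    simp [ENNReal.rpow_eq_zero_iff, hC0, hCtop])
                  (ENNReal.rpow_ne_top_of_nonneg (by linarith) hCtop), one_mul]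
      have harith : ∫⁻ x, (ENNReal.ofReal θ * F x + ENNReal.ofReal (1-θ) * G x) ∂μ = 1 := by
        rw [lintegral_add_left (hFm.const_mul _),
          lintegral_const_mul' _ _ ENNReal.ofReal_ne_top,
          lintegral_const_mul' _ _ ENNReal.ofReal_ne_top, hFint, hGint,
          mul_one, mul_one, ← ENNReal.ofReal_add hθ0.le (by linarith)]
        norm_num
      have hFfin : ∀ᵐ x ∂μ, F x < ⊤ := by
        refine ae_lt_top hFm ?_
        rw [hFint]; exact one_ne_top
      have hGfin : ∀ᵐ x ∂μ, G x < ⊤ := by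
        refine ae_lt_top hGm ?_
        rw [hGint]; exact one_ne_top
      have hae_le : (fun x => F x ^ θ * G x ^ (1-θ)) ≤ᵐ[μ]
          fun x => ENNReal.ofReal θ * F x + ENNReal.ofReal (1-θ) * G x := by
        filter_upwards [hFfin, hGfin] with x hFx hGx
        exact young_ennreal hθ0 hθ1 _ _ hFx.ne hGx.ne
      have heq_ae : (fun x => F x ^ θ * G x ^ (1-θ)) =ᵐ[μ]
          fun x => ENNReal.ofReal θ * F x + ENNReal.ofReal (1-θ) * G x := by
        refine ae_eq_of_ae_le_of_lintegral_le hae_le ?_ ?_ ?_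
        · rw [hmix]; exact one_ne_top
        · exact ((measurable_const.mul hFm).add (measurable_const.mul hGm)).aemeasurable
        · rw [harith, hmix]
      have hFG : F =ᵐ[μ] G := by
        filter_upwards [heq_ae, hFfin, hGfin] with x hx hFx hGx
        exact young_eq_ennreal hθ0 hθ1 hFx.ne hGx.ne hx
      -- conclude f = g a.e.
      set k := (A * C⁻¹) ^ ((α+1)⁻¹) with hkdef
      have hk_top : k ≠ ⊤ :=
        ENNReal.rpow_ne_top_of_nonneg (by positivity) (ENNReal.mul_ne_top hAtop hCinv)
      have hfg_scaled : f =ᵐ[μ] fun x => k * g x := by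
        filter_upwards [hFG] with x hx
        rw [hFdef, hGdef] at hx
        simp only at hx
        have h3 : f x ^ (α+1) = (A * C⁻¹) * g x ^ (α+1) := by
          calc f x ^ (α+1) = A * (A⁻¹ * f x ^ (α+1)) := by
                rw [← mul_assoc, ENNReal.mul_inv_cancel hA0 hAtop, one_mul]
            _ = A * (C⁻¹ * g x ^ (α+1)) := by rw [hx]
            _ = (A * C⁻¹) * g x ^ (α+1) := by ring
        have h4 := congrArg (fun z => z ^ ((α+1)⁻¹)) h3
        rwa [ENNReal.rpow_rpow_inv (by positivity), ENNReal.mul_rpow_of_nonneg _ _ (by positivity),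
          ENNReal.rpow_rpow_inv (by positivity)] at h4
      have hk1 : k = 1 := by
        have h5 : ∫⁻ x, k * g x ∂μ = 1 := by
          rw [← lintegral_congr_ae hfg_scaled]; exact hfint
        have h6 : ∫⁻ x, k * g x ∂μ = k := by
          rw [lintegral_const_mul' _ _ hk_top, hgint, mul_one]
        rw [h6] at h5
        exact h5
      filter_upwards [hfg_scaled] with x hx
      rw [hx, hk1, one_mul]
    · intro hfg
      have hBA : B = A := by
        rw [hB, hA]
        apply lintegral_congr_ae
        filter_upwards [hfg] with x hx
        have hpow : ∀ z : ℝ≥0∞, z ^ α * z = z ^ (α + 1) := fun z => by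
          rw [ENNReal.rpow_add_of_nonneg _ _ hα.le zero_le_one, ENNReal.rpow_one]
        rw [hx, hpow]
      have hCA : C = A := by
        rw [hC, hA]
        apply lintegral_congr_ae
        filter_upwards [hfg] with x hx
        rw [hx]
      rw [key]
      have hba : lb = la := by rw [hlb, hBA, hla]
      have hca : lc = la := by rw [hlc, hCA, hla]
      rw [hba, hca]
      have : la - (1 + 1/α) * la + (1/α) * la = 0 := by field_simp; ring
      rw [this]
      exact rfl
end
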